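/- arXiv:1911.04301 — 6 statements merged into one kernel-verified Lean document; each statement's English description precedes it below -/
import Mathlib

section
/- Let a, b, ε, δ be real numbers with a ≥ 1, b > 0, 0 < ε < 1 and 0 < δ < 1, and let m be a real number satisfying m ≥ 2(a + log(1/δ))/ε + 2a − b + 1. Then the tail of the Beta(a, b+m) distribution beyond ε is less than δ; that is, ∫_ε^1 r^(a−1) (1−r)^(b+m−1) dr < δ · B(a, b+m). -/
open Real MeasureTheory

private lemma cont_g (p q : ℝ) (hp : 0 ≤ p) (hq : 0 ≤ q) :
    Continuous (fun r : ℝ => r ^ p * (1 - r) ^ q) :=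
  (Real.continuous_rpow_const hp).mul
    ((Real.continuous_rpow_const hq).comp (continuous_const.sub continuous_id))

private lemma real_beta_eq (a c : ℝ) (ha : 0 < a) (hc : 0 < c) :
    Real.Gamma a * Real.Gamma c
      = Real.Gamma (a + c) * ∫ r in (0:ℝ)..1, r ^ (a - 1) * (1 - r) ^ (c - 1) := by
  have h := Complex.Gamma_mul_Gamma_eq_betaIntegral (s := (a:ℂ)) (t := (c:ℂ))
    (by simpa using ha) (by simpa using hc)
  have hbeta : Complex.betaIntegral (a:ℂ) (c:ℂ)
      = ((∫ r in (0:ℝ)..1, r ^ (a - 1) * (1 - r) ^ (c - 1) : ℝ) : ℂ) := by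
    rw [Complex.betaIntegral, ← intervalIntegral.integral_ofReal]
    apply intervalIntegral.integral_congr
    intro x hx
    have hx' : x ∈ Set.Icc (0:ℝ) 1 := by
      simpa [Set.uIcc_of_le (by norm_num : (0:ℝ) ≤ 1)] using hx
    have h1 : (0:ℝ) ≤ x := hx'.1
    have h2 : (0:ℝ) ≤ 1 - x := by linarith [hx'.2]
    simp only [Complex.ofReal_mul]
    rw [Complex.ofReal_cpow h1, Complex.ofReal_cpow h2]
    push_cast
    ring
  rw [hbeta, ← Complex.ofReal_add, Complex.Gamma_ofReal, Complex.Gamma_ofReal,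
    Complex.Gamma_ofReal] at h
  exact_mod_cast h

/-- PAC-style bound for the β-Risk model: if `m ≥ 2(a + log(1/δ))/ε + 2a − b + 1`, then the
Beta(a, b+m) tail beyond ε is less than δ·B(a, b+m). -/
theorem beta_tail_lt_delta (a b ε δ m : ℝ) (ha : 1 ≤ a) (hb : 0 < b)
    (hε : 0 < ε) (hε1 : ε < 1) (hδ : 0 < δ) (hδ1 : δ < 1)
    (hm : 2 * (a + Real.log (1 / δ)) / ε + 2 * a - b + 1 ≤ m) :
    ∫ r in ε..1, r ^ (a - 1) * (1 - r) ^ (b + m - 1) <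
      δ * (Real.Gamma a * Real.Gamma (b + m) / Real.Gamma (a + b + m)) := by
  set c : ℝ := b + m with hcdef
  set L : ℝ := Real.log (1 / δ) with hLdef
  have hL : 0 < L := Real.log_pos (by rw [lt_div_iff₀ hδ]; linarith)
  have hq : 0 < 2 * (a + L) / ε := by positivity
  have hc1 : 2 * (a + L) / ε + 2 * a + 1 ≤ c := by
    rw [hcdef]; linarith
  have hcpos : (0:ℝ) < c := by linarith
  have hc1' : (0:ℝ) < c - 1 := by linarith
  have ha0 : (0:ℝ) < a := by linarith
  have ha1 : (0:ℝ) ≤ a - 1 := by linarith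
  -- notation
  set g : ℝ → ℝ := fun r => r ^ (a - 1) * (1 - r) ^ (c - 1) with hgdef
  have hgcont : Continuous g := cont_g _ _ ha1 hc1'.le
  set lo : ℝ := ε/2 with hlo
  set hi : ℝ := (1/2 : ℝ) with hhi
  set E : ℝ := Real.exp (-((c - 1) * ε / 2)) with hEdef
  have hEpos : 0 < E := Real.exp_pos _
  set B : ℝ := ∫ r in (0:ℝ)..1, g r with hBdef
  -- Step A: substitution r = 2u
  have hsub : (∫ r in ε..1, g r) = 2 * ∫ u in lo..hi, g (2 * u) := by
    rw [intervalIntegral.integral_comp_mul_left g (by norm_num : (2:ℝ) ≠ 0)]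
    have h2lo : (2:ℝ) * lo = ε := by rw [hlo]; ring
    have h2hi : (2:ℝ) * hi = 1 := by rw [hhi]; norm_num
    rw [h2lo, h2hi, smul_eq_mul]
    ring
  -- Step B: pointwise bound on [ε/2, 1/2]
  have hpt : ∀ x ∈ Set.Icc lo hi,
      g (2 * x) ≤ 2 ^ (a - 1) * E * g x := by
    intro x hx
    obtain ⟨hxl, hxr⟩ := hx
    rw [hlo] at hxl
    rw [hhi] at hxr
    have hx0 : (0:ℝ) ≤ x := by linarith
    have h2x : (0:ℝ) ≤ 1 - 2 * x := by linarith
    have h1x : (0:ℝ) ≤ 1 - x := by linarith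
    have hbase : 1 - 2 * x ≤ Real.exp (-(ε/2)) * (1 - x) := by
      have he : 1 - ε/2 ≤ Real.exp (-(ε/2)) := by
        have := Real.add_one_le_exp (-(ε/2)); linarith
      nlinarith [sq_nonneg (1 - x), mul_nonneg h1x (sub_nonneg.2 he)]
    have hpow : (1 - 2 * x) ^ (c - 1) ≤ Real.exp (-(ε/2)) ^ (c - 1) * (1 - x) ^ (c - 1) := by
      rw [← Real.mul_rpow (Real.exp_pos _).le h1x]
      exact Real.rpow_le_rpow h2x hbase hc1'.le
    have hexp : Real.exp (-(ε/2)) ^ (c - 1) = E := by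
      rw [hEdef, ← Real.exp_mul]; ring_nf
    have hxpow : (2 * x) ^ (a - 1) = 2 ^ (a - 1) * x ^ (a - 1) :=
      Real.mul_rpow (by norm_num) hx0
    have hgx : g (2 * x) = (2 * x) ^ (a - 1) * (1 - 2 * x) ^ (c - 1) := rfl
    rw [hgx, hxpow, hgdef]
    have hx1 : (0:ℝ) ≤ x ^ (a - 1) := Real.rpow_nonneg hx0 _
    have h2a : (0:ℝ) ≤ (2:ℝ) ^ (a - 1) := Real.rpow_nonneg (by norm_num) _
    calc 2 ^ (a - 1) * x ^ (a - 1) * (1 - 2 * x) ^ (c - 1)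
        ≤ 2 ^ (a - 1) * x ^ (a - 1) * (Real.exp (-(ε/2)) ^ (c - 1) * (1 - x) ^ (c - 1)) := by
          apply mul_le_mul_of_nonneg_left hpow (mul_nonneg h2a hx1)
      _ = 2 ^ (a - 1) * E * (x ^ (a - 1) * (1 - x) ^ (c - 1)) := by rw [hexp]; ring
  -- Step B integral form
  have hint1 : IntervalIntegrable (fun x => g (2 * x)) volume lo hi :=
    (hgcont.comp (continuous_const.mul continuous_id)).intervalIntegrable _ _
  have hint2 : IntervalIntegrable (fun x => 2 ^ (a - 1) * E * g x) volume lo hi :=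
    (continuous_const.mul hgcont).intervalIntegrable _ _
  have hmono : (∫ x in lo..hi, g (2 * x))
      ≤ ∫ x in lo..hi, 2 ^ (a - 1) * E * g x :=
    intervalIntegral.integral_mono_on (by rw [hlo, hhi]; linarith) hint1 hint2 hpt
  -- Step C: extend to [0,1]
  have hsubint : (∫ x in lo..hi, g x) ≤ B := by
    apply intervalIntegral.integral_mono_interval (by rw [hlo]; positivity)
      (by rw [hlo, hhi]; linarith) (by rw [hhi]; norm_num)
    · filter_upwards [ae_restrict_mem measurableSet_Ioc] with x hx
      exact mul_nonneg (Real.rpow_nonneg hx.1.le _)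
        (Real.rpow_nonneg (by linarith [hx.2]) _)
    · exact hgcont.intervalIntegrable _ _
  -- B is positive
  have hBeq : Real.Gamma a * Real.Gamma c = Real.Gamma (a + c) * B :=
    real_beta_eq a c ha0 hcpos
  have hGac : 0 < Real.Gamma (a + c) := Real.Gamma_pos_of_pos (by linarith)
  have hBpos : 0 < B := by
    have h1 : 0 < Real.Gamma a * Real.Gamma c :=
      mul_pos (Real.Gamma_pos_of_pos ha0) (Real.Gamma_pos_of_pos hcpos)
    nlinarith
  -- arithmetic: 2^a * E < δ
  have hkey : 2 ^ (a:ℝ) * E < δ := by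
    have hεc : a * Real.log 2 + L < (c - 1) * ε / 2 := by
      have h1 : 2 * (a + L) / ε + 2 * a ≤ c - 1 := by linarith
      have h2 : (2 * (a + L) / ε) * ε = 2 * (a + L) := by
        field_simp
      have h3 : 2 * (a + L) + 2 * a * ε ≤ (c - 1) * ε := by
        calc 2 * (a + L) + 2 * a * ε = (2 * (a + L) / ε + 2 * a) * ε := by rw [add_mul, h2]
          _ ≤ (c - 1) * ε := mul_le_mul_of_nonneg_right h1 hε.le
      have hlog2 : Real.log 2 < 1 := by
        have := Real.log_lt_sub_one_of_pos (by norm_num : (0:ℝ) < 2) (by norm_num)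
        linarith
      nlinarith [mul_pos (by linarith : (0:ℝ) < 2 * a) hε]
    have : E < Real.exp (-(a * Real.log 2 + L)) := by
      rw [hEdef]
      exact Real.exp_lt_exp.2 (by linarith)
    have hexpL : Real.exp (-L) = δ := by
      rw [hLdef, Real.log_div one_ne_zero (ne_of_gt hδ), Real.log_one]
      simp [Real.exp_log hδ]
    have h2a : Real.exp (-(a * Real.log 2 + L)) = (2 ^ (a:ℝ))⁻¹ * δ := by
      rw [neg_add, Real.exp_add, hexpL]
      congr 1
      rw [← Real.log_rpow (by norm_num : (0:ℝ) < 2) a, Real.exp_neg,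
        Real.exp_log (Real.rpow_pos_of_pos (by norm_num) _)]
    have h2apos : (0:ℝ) < 2 ^ (a:ℝ) := Real.rpow_pos_of_pos (by norm_num) _
    calc 2 ^ (a:ℝ) * E < 2 ^ (a:ℝ) * ((2 ^ (a:ℝ))⁻¹ * δ) := by
          apply mul_lt_mul_of_pos_left _ h2apos
          rw [← h2a]; exact this
      _ = δ := by field_simp
  -- assemble
  have h2pow : 2 * (2:ℝ) ^ (a - 1) = 2 ^ (a:ℝ) := by
    have h := Real.rpow_add (by norm_num : (0:ℝ) < 2) (a-1) 1
    rw [Real.rpow_one, show a - 1 + 1 = a by ring] at h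
    linarith
  have hchain : (∫ r in ε..1, g r) ≤ 2 ^ (a:ℝ) * E * B := by
    calc (∫ r in ε..1, g r) = 2 * ∫ u in lo..hi, g (2 * u) := hsub
      _ ≤ 2 * ∫ x in lo..hi, 2 ^ (a - 1) * E * g x := by linarith
      _ = 2 * (2 ^ (a - 1) * E) * ∫ x in lo..hi, g x := by
          rw [intervalIntegral.integral_const_mul]; ring
      _ ≤ 2 * (2 ^ (a - 1) * E) * B := by
          apply mul_le_mul_of_nonneg_left hsubint
          positivity
      _ = 2 ^ (a:ℝ) * E * B := by rw [← h2pow]; ring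
  have hfinal : 2 ^ (a:ℝ) * E * B < δ * B :=
    mul_lt_mul_of_pos_right hkey hBpos
  have hRHS : δ * (Real.Gamma a * Real.Gamma (b + m) / Real.Gamma (a + b + m)) = δ * B := by
    have hac : a + b + m = a + c := by rw [hcdef]; ring
    rw [hac, hBeq, hcdef]
    field_simp
    exact div_self (ne_of_gt hGac)
  rw [hRHS]
  calc (∫ r in ε..1, r ^ (a-1) * (1-r) ^ (b + m - 1)) = ∫ r in ε..1, g r := by rfl
    _ ≤ 2 ^ (a:ℝ) * E * B := hchain
    _ < δ * B := hfinal
end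

section
/- Let a ≥ 1, c > 1 and λ be real numbers with 0 ≤ λ < c − 1. Then the exponential moment of the Beta(a, c) distribution satisfies (∫_0^1 e^(λ r) r^(a−1) (1−r)^(c−1) dr) / B(a, c) ≤ ((a + c − 1)/(c − 1 − λ))^a. -/
open Real MeasureTheory

/-- Coercion identity for the Beta integrand. -/
lemma beta_ofReal {u v x : ℝ} (hx0 : 0 ≤ x) (hx1 : x ≤ 1) :
    ((x ^ (u - 1) * (1 - x) ^ (v - 1) : ℝ) : ℂ) =
      (x : ℂ) ^ ((u : ℂ) - 1) * (1 - (x : ℂ)) ^ ((v : ℂ) - 1) := by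
  rw [Complex.ofReal_mul, Complex.ofReal_cpow hx0,
    Complex.ofReal_cpow (by linarith : (0:ℝ) ≤ 1 - x)]
  push_cast
  ring

/-- Real Beta integral in terms of Gamma functions. -/
lemma betaIntegral_real_eq {u v : ℝ} (hu : 0 < u) (hv : 0 < v) :
    ∫ x in (0:ℝ)..1, x ^ (u - 1) * (1 - x) ^ (v - 1) =
      Real.Gamma u * Real.Gamma v / Real.Gamma (u + v) := by
  have h := Complex.Gamma_mul_Gamma_eq_betaIntegral (s := (u : ℂ)) (t := (v : ℂ))
    (by simpa using hu) (by simpa using hv)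
  have hβ : Complex.betaIntegral (u : ℂ) (v : ℂ) =
      ((∫ x in (0:ℝ)..1, x ^ (u - 1) * (1 - x) ^ (v - 1) : ℝ) : ℂ) := by
    rw [Complex.betaIntegral, ← intervalIntegral.integral_ofReal]
    refine intervalIntegral.integral_congr fun x hx => ?_
    rw [Set.uIcc_of_le (by norm_num : (0:ℝ) ≤ 1)] at hx
    exact (beta_ofReal hx.1 hx.2).symm
  rw [hβ, ← Complex.ofReal_add, Complex.Gamma_ofReal, Complex.Gamma_ofReal,
    Complex.Gamma_ofReal] at h
  have h' : Real.Gamma u * Real.Gamma v =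
      Real.Gamma (u + v) * ∫ x in (0:ℝ)..1, x ^ (u - 1) * (1 - x) ^ (v - 1) := by
    exact_mod_cast h
  have hG : Real.Gamma (u + v) ≠ 0 := (Real.Gamma_pos_of_pos (by linarith)).ne'
  field_simp [hG]
  linarith [h']

/-- Integrability of the Beta integrand. -/
lemma betaIntegrable {u v : ℝ} (hu : 0 < u) (hv : 0 < v) :
    IntervalIntegrable (fun x : ℝ => x ^ (u - 1) * (1 - x) ^ (v - 1)) volume 0 1 := by
  have hC := Complex.betaIntegral_convergent (u := (u : ℂ)) (v := (v : ℂ))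
    (by simpa using hu) (by simpa using hv)
  rw [intervalIntegrable_iff] at hC ⊢
  refine hC.re.congr ?_
  filter_upwards [MeasureTheory.ae_restrict_mem measurableSet_uIoc] with x hx
  rw [Set.uIoc_of_le (by norm_num : (0:ℝ) ≤ 1)] at hx
  rw [← beta_ofReal hx.1.le hx.2]
  simp [RCLike.ofReal_re]

/-- Upper bound on a Gamma ratio from log-convexity. -/
lemma Gamma_add_le {x s : ℝ} (hx : 0 < x) (hs : 1 ≤ s) :
    Real.Gamma (x + s) ≤ Real.Gamma x * (x + s - 1) ^ s := by
  set f : ℝ → ℝ := Real.log ∘ Real.Gamma with hf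
  have hconv := Real.convexOn_log_Gamma
  have hm1 : (0:ℝ) < x + s - 1 := by linarith
  have hmem1 : x ∈ Set.Ioi (0:ℝ) := hx
  have hmem2 : x + s - 1 ∈ Set.Ioi (0:ℝ) := hm1
  have hmem3 : x + s ∈ Set.Ioi (0:ℝ) := by simp; linarith
  have hsec := hconv.secant_mono (a := x + s) (x := x) (y := x + s - 1)
    hmem3 hmem1 hmem2 (by intro h; linarith [h]) (by intro h; linarith [h])
    (by linarith)
  have hstep : f (x + s) - f (x + s - 1) = Real.log (x + s - 1) := by
    have hΓ : Real.Gamma (x + s) = (x + s - 1) * Real.Gamma (x + s - 1) := by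
      have := Real.Gamma_add_one hm1.ne'
      rw [show x + s - 1 + 1 = x + s by ring] at this
      exact this
    simp only [hf, Function.comp_apply, hΓ]
    rw [Real.log_mul hm1.ne' (Real.Gamma_pos_of_pos hm1).ne']
    ring
  have hkey : f (x + s) - f x ≤ s * Real.log (x + s - 1) := by
    rw [← hf] at hsec
    have h1 : (f x - f (x + s)) / (x - (x + s)) = (f (x + s) - f x) / s := by
      rw [show x - (x + s) = -s by ring, div_neg, ← neg_div, neg_sub]
    have h2 : (f (x + s - 1) - f (x + s)) / (x + s - 1 - (x + s)) =
        f (x + s) - f (x + s - 1) := by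
      rw [show x + s - 1 - (x + s) = (-1:ℝ) by ring, div_neg, div_one, neg_sub]
    rw [h1, h2, hstep] at hsec
    have hs0 : (0:ℝ) < s := by linarith
    calc f (x + s) - f x = (f (x + s) - f x) / s * s := (div_mul_cancel₀ _ hs0.ne').symm
    _ ≤ Real.log (x + s - 1) * s := mul_le_mul_of_nonneg_right hsec hs0.le
    _ = s * Real.log (x + s - 1) := by ring
  have hΓpos : 0 < Real.Gamma (x + s) := Real.Gamma_pos_of_pos (by linarith)
  have hΓxpos : 0 < Real.Gamma x := Real.Gamma_pos_of_pos hx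
  have := Real.exp_le_exp.mpr (by linarith [hkey] : f (x + s) ≤ f x + s * Real.log (x + s - 1))
  rw [Real.exp_add] at this
  simp only [hf, Function.comp_apply, Real.exp_log hΓpos, Real.exp_log hΓxpos] at this
  rwa [mul_comm s (Real.log (x + s - 1)), Real.exp_mul, Real.exp_log hm1] at this

/-- Lower bound on a Gamma ratio from log-convexity. -/
lemma le_Gamma_add {x s : ℝ} (hx : 1 < x) (hs : 0 < s) :
    Real.Gamma x * (x - 1) ^ s ≤ Real.Gamma (x + s) := by
  set f : ℝ → ℝ := Real.log ∘ Real.Gamma with hf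
  have hconv := Real.convexOn_log_Gamma
  have hm1 : (0:ℝ) < x - 1 := by linarith
  have hsec := hconv.secant_mono (a := x) (x := x - 1) (y := x + s)
    (show x ∈ Set.Ioi (0:ℝ) by simp; linarith)
    (show x - 1 ∈ Set.Ioi (0:ℝ) by simpa using hm1)
    (show x + s ∈ Set.Ioi (0:ℝ) by simp; linarith)
    (by intro h; linarith [h]) (by intro h; linarith [h]) (by linarith)
  have hstep : f x - f (x - 1) = Real.log (x - 1) := by
    have hΓ : Real.Gamma x = (x - 1) * Real.Gamma (x - 1) := by
      have := Real.Gamma_add_one hm1.ne'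
      rw [show x - 1 + 1 = x by ring] at this
      exact this
    simp only [hf, Function.comp_apply, hΓ]
    rw [Real.log_mul hm1.ne' (Real.Gamma_pos_of_pos hm1).ne']
    ring
  have hkey : s * Real.log (x - 1) ≤ f (x + s) - f x := by
    rw [← hf] at hsec
    have h1 : (f (x - 1) - f x) / (x - 1 - x) = f x - f (x - 1) := by
      rw [show x - 1 - x = (-1:ℝ) by ring, div_neg, div_one, neg_sub]
    have h2 : (f (x + s) - f x) / (x + s - x) = (f (x + s) - f x) / s := by
      rw [show x + s - x = s by ring]
    rw [h1, h2, hstep] at hsec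
    calc s * Real.log (x - 1) = Real.log (x - 1) * s := by ring
    _ ≤ (f (x + s) - f x) / s * s := mul_le_mul_of_nonneg_right hsec hs.le
    _ = f (x + s) - f x := div_mul_cancel₀ _ hs.ne' 
  have hΓpos : 0 < Real.Gamma (x + s) := Real.Gamma_pos_of_pos (by linarith)
  have hΓxpos : 0 < Real.Gamma x := Real.Gamma_pos_of_pos (by linarith)
  have := Real.exp_le_exp.mpr (by linarith [hkey] : f x + s * Real.log (x - 1) ≤ f (x + s))
  rw [Real.exp_add] at this
  simp only [hf, Function.comp_apply, Real.exp_log hΓpos, Real.exp_log hΓxpos] at this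
  rwa [mul_comm s (Real.log (x - 1)), Real.exp_mul, Real.exp_log hm1] at this

/-- Moment bound for a Beta(a, c) distribution: for `a ≥ 1`, `c > 1` and `0 ≤ λ < c − 1`,
`(∫_0^1 e^(λ r) r^(a−1) (1−r)^(c−1) dr) / B(a, c) ≤ ((a + c − 1)/(c − 1 − λ))^a`. -/
theorem beta_exp_moment_le (a c l : ℝ) (ha : 1 ≤ a) (hc : 1 < c)
    (hl0 : 0 ≤ l) (hl : l < c - 1) :
    (∫ r in (0:ℝ)..1, Real.exp (l * r) * r ^ (a - 1) * (1 - r) ^ (c - 1)) /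
        (Real.Gamma a * Real.Gamma c / Real.Gamma (a + c)) ≤
      ((a + c - 1) / (c - 1 - l)) ^ a := by
  have ha0 : 0 < a := by linarith
  have hc0 : 0 < c := by linarith
  have hcl : 0 < c - l := by linarith
  have hcl1 : 1 < c - l := by linarith
  -- positivity of Gamma values
  have hΓa := Real.Gamma_pos_of_pos ha0
  have hΓc := Real.Gamma_pos_of_pos hc0
  have hΓac := Real.Gamma_pos_of_pos (show (0:ℝ) < a + c by linarith)
  have hΓcl := Real.Gamma_pos_of_pos hcl
  have hΓacl := Real.Gamma_pos_of_pos (show (0:ℝ) < a + (c - l) by linarith)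
  have hD : 0 < Real.Gamma a * Real.Gamma c / Real.Gamma (a + c) := by positivity
  -- Step 1: bound the numerator by the Beta integral with parameters (a, c - l)
  have hnum : (∫ r in (0:ℝ)..1, Real.exp (l * r) * r ^ (a - 1) * (1 - r) ^ (c - 1)) ≤
      Real.Gamma a * Real.Gamma (c - l) / Real.Gamma (a + (c - l)) := by
    rw [← betaIntegral_real_eq ha0 hcl]
    refine intervalIntegral.integral_mono_on (by norm_num) ?_ (betaIntegrable ha0 hcl) ?_
    · have hbeta := betaIntegrable ha0 hc0
      have := hbeta.continuousOn_mul (g := fun x : ℝ => Real.exp (l * x))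
        ((Real.continuous_exp.comp (continuous_const.mul continuous_id)).continuousOn)
      exact this.congr (fun x _ => (mul_assoc _ _ _).symm)
    · intro x hx
      have hx0 : (0:ℝ) ≤ x := hx.1
      have hx1 : (0:ℝ) ≤ 1 - x := by linarith [hx.2]
      have hkey : Real.exp (l * x) * (1 - x) ^ (c - 1) ≤ (1 - x) ^ (c - l - 1) := by
        have hsplit : (1 - x) ^ (c - 1) = (1 - x) ^ l * (1 - x) ^ (c - l - 1) := by
          rw [← Real.rpow_add' hx1 (by intro h; linarith)]
          ring_nf
        rw [hsplit, ← mul_assoc]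
        have hbound : Real.exp (l * x) * (1 - x) ^ l ≤ 1 := by
          have hexp : Real.exp (l * x) = (Real.exp x) ^ l := by
            rw [← Real.exp_mul]; ring_nf
          rw [hexp, ← Real.mul_rpow (Real.exp_pos x).le hx1]
          refine Real.rpow_le_one (by positivity) ?_ hl0
          have h1 : 1 - x ≤ Real.exp (-x) := by
            have := Real.add_one_le_exp (-x)
            linarith
          calc Real.exp x * (1 - x) ≤ Real.exp x * Real.exp (-x) := by
                exact mul_le_mul_of_nonneg_left h1 (Real.exp_pos x).le
          _ = 1 := by rw [← Real.exp_add]; simp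
        calc Real.exp (l * x) * (1 - x) ^ l * (1 - x) ^ (c - l - 1)
            ≤ 1 * (1 - x) ^ (c - l - 1) :=
              mul_le_mul_of_nonneg_right hbound (Real.rpow_nonneg hx1 _)
        _ = (1 - x) ^ (c - l - 1) := one_mul _
      calc Real.exp (l * x) * x ^ (a - 1) * (1 - x) ^ (c - 1)
          = x ^ (a - 1) * (Real.exp (l * x) * (1 - x) ^ (c - 1)) := by ring
      _ ≤ x ^ (a - 1) * (1 - x) ^ (c - l - 1) :=
          mul_le_mul_of_nonneg_left hkey (Real.rpow_nonneg hx0 _)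
      _ = x ^ (a - 1) * (1 - x) ^ ((c - l) - 1) := by ring_nf
  -- Step 2: Gamma ratio bounds
  have hupper : Real.Gamma (a + c) ≤ Real.Gamma c * (a + c - 1) ^ a := by
    have := Gamma_add_le (x := c) (s := a) hc0 ha
    rw [show c + a = a + c by ring] at this
    exact this
  have hlower : Real.Gamma (c - l) * (c - 1 - l) ^ a ≤ Real.Gamma (a + (c - l)) := by
    have := le_Gamma_add (x := c - l) (s := a) hcl1 ha0
    rw [show c - l + a = a + (c - l) by ring, show c - l - 1 = c - 1 - l by ring] at this
    exact this
  -- Step 3: combine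
  rw [div_le_iff₀ hD]
  have hclm : 0 < c - 1 - l := by linarith
  have hpow1 : (0:ℝ) < (c - 1 - l) ^ a := Real.rpow_pos_of_pos hclm a
  have hpow2 : (0:ℝ) < (a + c - 1) ^ a := Real.rpow_pos_of_pos (by linarith) a
  refine hnum.trans ?_
  rw [Real.div_rpow (by linarith : (0:ℝ) ≤ a + c - 1) hclm.le, div_mul_div_comm,
    div_le_div_iff₀ hΓacl (by positivity)]
  have hmul : (Real.Gamma (c - l) * (c - 1 - l) ^ a) * Real.Gamma (a + c) ≤
      Real.Gamma (a + (c - l)) * (Real.Gamma c * (a + c - 1) ^ a) :=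
    mul_le_mul hlower hupper hΓac.le (by positivity)
  calc Real.Gamma a * Real.Gamma (c - l) * ((c - 1 - l) ^ a * Real.Gamma (a + c))
      = Real.Gamma a * ((Real.Gamma (c - l) * (c - 1 - l) ^ a) * Real.Gamma (a + c)) := by ring
  _ ≤ Real.Gamma a * (Real.Gamma (a + (c - l)) * (Real.Gamma c * (a + c - 1) ^ a)) :=
      mul_le_mul_of_nonneg_left hmul hΓa.le
  _ = (a + c - 1) ^ a * (Real.Gamma a * Real.Gamma c) * Real.Gamma (a + (c - l)) := by ring
end

section
/- Let a > 0 be a real number and let g : ℝ → ℝ be continuous on [0,1] with g(r) ≥ 0 for all r ∈ [0,1] and g(0) > 0. For each natural number m define R(m) = (∫_0^1 r^a (1−r)^m g(r) dr) / (∫_0^1 r^(a−1) (1−r)^m g(r) dr). Then m · R(m) → a as m → ∞. -/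
open Real MeasureTheory Filter

/-- Auxiliary Laplace-method asymptotic: `m^b ∫₀¹ r^(b-1) (1-r)^m g(r) dr → g(0) Γ(b)`. -/
lemma laplace_aux (b : ℝ) (hb : 0 < b) (g : ℝ → ℝ)
    (hg : ContinuousOn g (Set.Icc 0 1)) :
    Tendsto (fun m : ℕ => (m : ℝ) ^ b * ∫ r in (0:ℝ)..1, r ^ (b - 1) * (1 - r) ^ m * g r)
      atTop (nhds (g 0 * Real.Gamma b)) := by
  obtain ⟨C, hC⟩ := isCompact_Icc.exists_bound_of_continuousOn hg
  have hC0 : 0 ≤ C := le_trans (norm_nonneg _) (hC 0 ⟨le_refl _, zero_le_one⟩)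
  set F : ℕ → ℝ → ℝ := fun m t =>
    Set.indicator (Set.Ioc 0 (m : ℝ))
      (fun t => t ^ (b - 1) * (1 - t / m) ^ m * g (t / m)) t with hF
  -- continuity of the inner function on Ioc 0 m
  have hcont : ∀ m : ℕ, ContinuousOn
      (fun t : ℝ => t ^ (b - 1) * (1 - t / m) ^ m * g (t / m)) (Set.Ioc 0 (m : ℝ)) := by
    intro m
    rcases Nat.eq_zero_or_pos m with hm | hm
    · simp [hm]
    have hm' : (0:ℝ) < m := by exact_mod_cast hm
    have h1 : ContinuousOn (fun t : ℝ => t ^ (b - 1)) (Set.Ioc 0 (m : ℝ)) :=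
      continuousOn_id.rpow_const fun t ht => Or.inl (ne_of_gt ht.1)
    have h2 : ContinuousOn (fun t : ℝ => (1 - t / m) ^ m) (Set.Ioc 0 (m : ℝ)) :=
      ((continuous_const.sub (continuous_id.div_const _)).pow m).continuousOn
    have h3 : ContinuousOn (fun t : ℝ => g (t / m)) (Set.Ioc 0 (m : ℝ)) := by
      apply hg.comp (continuous_id.div_const (m:ℝ)).continuousOn
      intro t ht
      exact ⟨div_nonneg ht.1.le hm'.le, (div_le_one hm').mpr ht.2⟩
    exact (h1.mul h2).mul h3
  -- dominated convergence
  have key : Tendsto (fun m : ℕ => ∫ t in Set.Ioi (0:ℝ), F m t) atTop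
      (nhds (∫ t in Set.Ioi (0:ℝ), t ^ (b - 1) * Real.exp (-t) * g 0)) := by
    apply MeasureTheory.tendsto_integral_of_dominated_convergence
      (fun t => t ^ (b - 1) * Real.exp (-t) * C)
    · intro m
      rw [hF]
      exact (aestronglyMeasurable_indicator_iff measurableSet_Ioc).mpr
        ((hcont m).aestronglyMeasurable measurableSet_Ioc)
    · have : Integrable (fun t : ℝ => C * (Real.exp (-t) * t ^ (b - 1)))
          (volume.restrict (Set.Ioi (0:ℝ))) :=
        (Real.GammaIntegral_convergent hb).const_mul C
      exact this.congr (by filter_upwards with t using by ring)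
    · intro m
      rw [ae_restrict_iff' measurableSet_Ioi]
      filter_upwards with t ht
      by_cases htm : t ∈ Set.Ioc (0:ℝ) (m:ℝ)
      · have ht0 : 0 < t := htm.1
        have hm' : (0:ℝ) < m := lt_of_lt_of_le ht0 htm.2
        have hdiv : t / m ∈ Set.Icc (0:ℝ) 1 :=
          ⟨div_nonneg ht0.le hm'.le, (div_le_one hm').mpr htm.2⟩
        have h1m : 0 ≤ 1 - t / m := by
          have := hdiv.2; linarith
        have hpow : (1 - t / m) ^ m ≤ Real.exp (-t) := by
          have hle : 1 - t / m ≤ Real.exp (-(t / m)) := by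
            have := Real.add_one_le_exp (-(t / m)); linarith
          calc (1 - t / m) ^ m ≤ (Real.exp (-(t / m))) ^ m := pow_le_pow_left₀ h1m hle m
            _ = Real.exp ((m : ℝ) * (-(t / m))) := (Real.exp_nat_mul _ m).symm
            _ = Real.exp (-t) := by
                congr 1
                field_simp
        simp only [hF]
        rw [Set.indicator_of_mem htm]
        have ht1 : (0:ℝ) ≤ t ^ (b - 1) := Real.rpow_nonneg ht0.le _
        have hgle : |g (t / m)| ≤ C := hC _ hdiv
        calc ‖t ^ (b - 1) * (1 - t / m) ^ m * g (t / m)‖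
            = t ^ (b - 1) * (1 - t / m) ^ m * |g (t / m)| := by
              rw [Real.norm_eq_abs, abs_mul, abs_mul, abs_of_nonneg ht1,
                abs_of_nonneg (pow_nonneg h1m m)]
          _ ≤ t ^ (b - 1) * Real.exp (-t) * C := by
              gcongr
      · simp only [hF]
        rw [Set.indicator_of_notMem htm]
        have : (0:ℝ) ≤ t ^ (b - 1) * Real.exp (-t) * C :=
          mul_nonneg (mul_nonneg (Real.rpow_nonneg (le_of_lt ht) _) (Real.exp_pos _).le) hC0
        simpa using this
    · rw [ae_restrict_iff' measurableSet_Ioi]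
      filter_upwards with t ht
      have ht0 : (0:ℝ) < t := ht
      have hev : ∀ᶠ m : ℕ in atTop, F m t =
          t ^ (b - 1) * (1 - t / m) ^ m * g (t / m) := by
        filter_upwards [eventually_ge_atTop (max 1 ⌈t⌉₊)] with m hm
        have hm1 : 1 ≤ m := le_trans (le_max_left _ _) hm
        have htm : t ≤ (m : ℝ) :=
          le_trans (Nat.le_ceil t) (by exact_mod_cast le_trans (le_max_right _ _) hm)
        simp only [hF]
        exact Set.indicator_of_mem (show t ∈ Set.Ioc 0 (m:ℝ) from ⟨ht0, htm⟩) _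
      refine Tendsto.congr' (hev.mono fun m h => h.symm) ?_
      have h2 : Tendsto (fun m : ℕ => (1 - t / m) ^ m) atTop (nhds (Real.exp (-t))) := by
        have := Real.tendsto_one_add_div_pow_exp (-t)
        refine this.congr fun m => ?_
        rw [neg_div, ← sub_eq_add_neg]
      have h3 : Tendsto (fun m : ℕ => g (t / m)) atTop (nhds (g 0)) := by
        have hcw : ContinuousWithinAt g (Set.Icc 0 1) 0 := hg 0 ⟨le_refl _, zero_le_one⟩
        apply hcw.tendsto.comp
        rw [tendsto_nhdsWithin_iff]
        constructor
        · exact tendsto_const_div_atTop_nhds_zero_nat t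
        · filter_upwards [eventually_ge_atTop (max 1 ⌈t⌉₊)] with m hm
          have hm1 : (1:ℝ) ≤ m := by exact_mod_cast le_trans (le_max_left _ _) hm
          have htm : t ≤ (m : ℝ) :=
            le_trans (Nat.le_ceil t) (by exact_mod_cast le_trans (le_max_right _ _) hm)
          exact ⟨div_nonneg ht0.le (by linarith), (div_le_one (by linarith)).mpr htm⟩
      exact (tendsto_const_nhds.mul h2).mul h3
  -- identify the limit integral
  have hlim : (∫ t in Set.Ioi (0:ℝ), t ^ (b - 1) * Real.exp (-t) * g 0)
      = g 0 * Real.Gamma b := by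
    rw [Real.Gamma_eq_integral hb, ← MeasureTheory.integral_const_mul]
    congr 1
    funext t
    ring
  rw [hlim] at key
  -- eventual equality of the two sequences
  refine Tendsto.congr' ?_ key
  filter_upwards [eventually_ge_atTop 1] with m hm1
  have hm' : (0:ℝ) < m := by exact_mod_cast hm1
  have hmne : (m:ℝ) ≠ 0 := hm'.ne'
  have step1 : (∫ t in Set.Ioi (0:ℝ), F m t)
      = ∫ t in (0:ℝ)..(m:ℝ), t ^ (b - 1) * (1 - t / m) ^ m * g (t / m) := by
    simp only [hF]
    rw [MeasureTheory.integral_indicator measurableSet_Ioc,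
      Measure.restrict_restrict measurableSet_Ioc,
      Set.inter_eq_self_of_subset_left Set.Ioc_subset_Ioi_self,
      intervalIntegral.integral_of_le hm'.le]
  have step2 : (∫ t in (0:ℝ)..(m:ℝ), t ^ (b - 1) * (1 - t / m) ^ m * g (t / m))
      = ∫ t in (0:ℝ)..(m:ℝ), (m:ℝ) ^ (b - 1) *
          ((t / m) ^ (b - 1) * (1 - t / m) ^ m * g (t / m)) := by
    apply intervalIntegral.integral_congr
    intro t ht
    rw [Set.uIcc_of_le hm'.le] at ht
    have ht0 : 0 ≤ t := ht.1
    have hmb : (m:ℝ) ^ (b - 1) ≠ 0 := (Real.rpow_pos_of_pos hm' _).ne'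
    simp only [Real.div_rpow ht0 hm'.le]
    field_simp
    try ring
  have step3 : (∫ t in (0:ℝ)..(m:ℝ),
        (t / (m:ℝ)) ^ (b - 1) * (1 - t / (m:ℝ)) ^ m * g (t / (m:ℝ)))
      = (m:ℝ) • ∫ x in (0:ℝ)/(m:ℝ)..(m:ℝ)/(m:ℝ), x ^ (b - 1) * (1 - x) ^ m * g x :=
    intervalIntegral.integral_comp_div (fun x => x ^ (b - 1) * (1 - x) ^ m * g x) hmne
  rw [zero_div, div_self hmne, smul_eq_mul] at step3
  rw [step1, step2, intervalIntegral.integral_const_mul, step3, ← mul_assoc,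
    ← Real.rpow_add_one hmne, sub_add_cancel]

/-- Asymptotic ERM risk from power-law attunement: if the risk density is
`ρ(r) = r^(a−1) g(r)` with `g` continuous, nonnegative and `g(0) > 0`, then the expected
ERM risk `R(m)` satisfies `m · R(m) → a` as `m → ∞`. -/
theorem erm_risk_asymptotic (a : ℝ) (ha : 0 < a) (g : ℝ → ℝ)
    (hg : ContinuousOn g (Set.Icc 0 1))
    (hg0 : ∀ r ∈ Set.Icc (0:ℝ) 1, 0 ≤ g r) (hgpos : 0 < g 0) :
    Tendsto (fun m : ℕ => (m : ℝ) *
        ((∫ r in (0:ℝ)..1, r ^ a * (1 - r) ^ m * g r) /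
          (∫ r in (0:ℝ)..1, r ^ (a - 1) * (1 - r) ^ m * g r)))
      atTop (nhds a) := by
  have hD := laplace_aux a ha g hg
  have hN := laplace_aux (a + 1) (by linarith) g hg
  simp only [add_sub_cancel_right] at hN
  have hGpos : 0 < Real.Gamma a := Real.Gamma_pos_of_pos ha
  have hne : g 0 * Real.Gamma a ≠ 0 := (mul_pos hgpos hGpos).ne'
  have hq := hN.div hD hne
  have hval : g 0 * Real.Gamma (a + 1) / (g 0 * Real.Gamma a) = a := by
    rw [Real.Gamma_add_one ha.ne']
    field_simp
  rw [hval] at hq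
  refine Tendsto.congr' ?_ hq
  filter_upwards [eventually_ge_atTop 1] with m hm1
  have hm' : (0:ℝ) < m := by exact_mod_cast hm1
  have hpa : ((m:ℝ) ^ a) ≠ 0 := (Real.rpow_pos_of_pos hm' _).ne'
  simp only [Pi.div_apply]
  rw [Real.rpow_add_one hm'.ne' a]
  set N := ∫ r in (0:ℝ)..1, r ^ a * (1 - r) ^ m * g r
  set D := ∫ r in (0:ℝ)..1, r ^ (a - 1) * (1 - r) ^ m * g r
  rw [show (m:ℝ) ^ a * (m:ℝ) * N = (m:ℝ) ^ a * ((m:ℝ) * N) by ring,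
    mul_div_mul_left _ _ hpa, mul_div_assoc]
end

section
/- Let a > 0 be a real number, N a natural number, and c_0, c_1, …, c_N nonnegative real numbers with c_0 > 0. For each natural number m ≥ 1 define R(m) = (∫_0^1 r^a (1−r)^m (Σ_{i=0}^N c_i r^i) dr) / (∫_0^1 r^(a−1) (1−r)^m (Σ_{i=0}^N c_i r^i) dr). Then there exists a constant C such that for all m ≥ 1, |R(m) − a/m| ≤ C/m². -/
open Real MeasureTheory

noncomputable def ermJ (m : ℕ) (x : ℝ) : ℝ := ∫ r in (0:ℝ)..1, r ^ (x - 1) * (1 - r) ^ m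

lemma ermJ_intg (m : ℕ) {x : ℝ} (hx : 0 < x) :
    IntervalIntegrable (fun r : ℝ => r ^ (x - 1) * (1 - r) ^ m) volume 0 1 := by
  apply IntervalIntegrable.mul_continuousOn
  · exact intervalIntegral.intervalIntegrable_rpow' (by linarith)
  · exact (Continuous.pow (by continuity) m).continuousOn

lemma ermJ_pos (m : ℕ) {x : ℝ} (hx : 0 < x) : 0 < ermJ m x := by
  apply intervalIntegral.intervalIntegral_pos_of_pos_on (ermJ_intg m hx)
  · intro r hr
    exact mul_pos (rpow_pos_of_pos hr.1 _) (pow_pos (by linarith [hr.2]) m)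
  · norm_num

lemma ermJ_mono (m : ℕ) {x y : ℝ} (hy : 1 ≤ y) (hxy : y ≤ x) : ermJ m x ≤ ermJ m y := by
  apply intervalIntegral.integral_mono_on (by norm_num) (ermJ_intg m (by linarith))
    (ermJ_intg m (by linarith))
  intro r hr
  rcases eq_or_lt_of_le hr.1 with h0 | h0
  · subst h0
    rcases eq_or_lt_of_le hxy with h | h
    · subst h; exact le_rfl
    · rw [Real.zero_rpow (by linarith), zero_mul]
      positivity
  · exact mul_le_mul_of_nonneg_right
      (Real.rpow_le_rpow_of_exponent_ge h0 hr.2 (by linarith))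
      (pow_nonneg (by linarith [hr.2]) m)

lemma ermJ_beta (m : ℕ) {x : ℝ} (hx : 0 < x) :
    (ermJ m x : ℂ) = Complex.betaIntegral x (m + 1) := by
  rw [Complex.betaIntegral, ermJ, ← intervalIntegral.integral_ofReal]
  apply intervalIntegral.integral_congr
  intro r hr
  rw [Set.uIcc_of_le (by norm_num : (0:ℝ) ≤ 1)] at hr
  push_cast
  rw [Complex.ofReal_cpow hr.1]
  push_cast
  rw [show ((m:ℂ) + 1 - 1) = (m : ℂ) by ring, Complex.cpow_natCast]

lemma ermJ_rec (m : ℕ) {x : ℝ} (hx : 0 < x) :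
    (x + m + 1) * ermJ m (x + 1) = x * ermJ m x := by
  have hxc : 0 < Complex.re (x : ℂ) := by simpa using hx
  have hmc : 0 < Complex.re ((m : ℂ) + 1) := by simp; positivity
  have hb1 := Complex.Gamma_mul_Gamma_eq_betaIntegral hxc hmc
  have hx1c : 0 < Complex.re ((x : ℂ) + 1) := by simp; linarith
  have hb2 := Complex.Gamma_mul_Gamma_eq_betaIntegral hx1c hmc
  have hG1 : Complex.Gamma ((x : ℂ) + 1) = x * Complex.Gamma x :=
    Complex.Gamma_add_one _ (by simpa using ne_of_gt hx)
  have hmx : ((x : ℂ) + ((m : ℂ) + 1)) ≠ 0 := by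
    intro h
    have := congrArg Complex.re h
    simp at this
    nlinarith [Nat.cast_nonneg (α := ℝ) m]
  have hG2 : Complex.Gamma ((x : ℂ) + 1 + ((m : ℂ) + 1)) =
      ((x : ℂ) + ((m : ℂ) + 1)) * Complex.Gamma ((x : ℂ) + ((m : ℂ) + 1)) := by
    rw [show (x : ℂ) + 1 + ((m : ℂ) + 1) = ((x : ℂ) + ((m:ℂ) + 1)) + 1 by ring]
    exact Complex.Gamma_add_one _ hmx
  have hGne : Complex.Gamma ((x : ℂ) + ((m : ℂ) + 1)) ≠ 0 := by
    apply Complex.Gamma_ne_zero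
    intro n h
    have := congrArg Complex.re h
    simp at this
    nlinarith [Nat.cast_nonneg (α := ℝ) m, Nat.cast_nonneg (α := ℝ) n]
  have key : ((x : ℂ) + ((m : ℂ) + 1)) * Complex.betaIntegral ((x:ℂ)+1) ((m:ℂ)+1) =
      (x : ℂ) * Complex.betaIntegral (x:ℂ) ((m:ℂ)+1) := by
    have h2 : (x : ℂ) * (Complex.Gamma (x:ℂ) * Complex.Gamma ((m:ℂ)+1)) =
        ((x:ℂ) + ((m:ℂ) + 1)) * Complex.Gamma ((x:ℂ) + ((m:ℂ)+1)) *
          Complex.betaIntegral ((x:ℂ)+1) ((m:ℂ)+1) := by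
      rw [← hG2]; rw [← hb2, hG1]; ring
    rw [hb1] at h2
    apply mul_left_cancel₀ hGne
    linear_combination -h2
  have hc1 : ((ermJ m (x+1) : ℝ) : ℂ) = Complex.betaIntegral ((x:ℂ)+1) ((m:ℂ)+1) := by
    rw [ermJ_beta m (by linarith : (0:ℝ) < x + 1)]; push_cast; ring_nf
  have hc0 : ((ermJ m x : ℝ) : ℂ) = Complex.betaIntegral (x:ℂ) ((m:ℂ)+1) := ermJ_beta m hx
  have : (((x + m + 1) * ermJ m (x + 1) : ℝ) : ℂ) = ((x * ermJ m x : ℝ) : ℂ) := by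
    push_cast
    rw [hc1, hc0]
    linear_combination key
  exact_mod_cast this

lemma erm_rpow_split {x : ℝ} (r : ℝ) (hr : 0 ≤ r) (i : ℕ) (hx : 0 < x) :
    r ^ (x + i - 1) = r ^ (x - 1) * r ^ i := by
  rw [← Real.rpow_natCast r i]
  rcases eq_or_ne ((x - 1) + i) 0 with h | h
  · have hi0 : i = 0 := by
      by_contra hne
      have : (1:ℝ) ≤ i := by exact_mod_cast Nat.one_le_iff_ne_zero.mpr hne
      linarith
    subst hi0
    have hx1 : x = 1 := by push_cast at h; linarith
    rw [hx1]; norm_num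
  · rw [show x + i - 1 = (x - 1) + i by ring, Real.rpow_add' hr h]

lemma erm_integral_expand (m N : ℕ) (c : ℕ → ℝ) {x : ℝ} (hx : 0 < x) :
    (∫ r in (0:ℝ)..1, r ^ (x - 1) * (1 - r) ^ m * (∑ i ∈ Finset.range (N+1), c i * r ^ i))
      = ∑ i ∈ Finset.range (N+1), c i * ermJ m (x + i) := by
  have h1 : ∀ i ∈ Finset.range (N+1), c i * ermJ m (x + i)
      = ∫ r in (0:ℝ)..1, c i * (r ^ (x + i - 1) * (1 - r) ^ m) := by
    intro i _
    simp only [ermJ]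
    rw [intervalIntegral.integral_const_mul]
  rw [Finset.sum_congr rfl h1, ← intervalIntegral.integral_finset_sum]
  · apply intervalIntegral.integral_congr
    intro r hr
    rw [Set.uIcc_of_le (by norm_num : (0:ℝ) ≤ 1)] at hr
    simp only
    rw [Finset.mul_sum]
    apply Finset.sum_congr rfl
    intro i _
    rw [erm_rpow_split r hr.1 i hx]
    ring
  · intro i _
    exact (ermJ_intg m (by positivity : (0:ℝ) < x + i)).const_mul (c i)

set_option maxHeartbeats 1000000 in
/-- Appendix B of the paper: for a risk density proportional to `r^(a−1) Σ_{i=0}^N c_i r^i`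
with `c_i ≥ 0` and `c_0 > 0`, the expected ERM risk satisfies `R(m) = a/m + O(1/m²)`. -/
theorem erm_risk_a_over_m (a : ℝ) (ha : 0 < a) (N : ℕ) (c : ℕ → ℝ)
    (hc : ∀ i ≤ N, 0 ≤ c i) (hc0 : 0 < c 0) :
    ∃ C : ℝ, ∀ m : ℕ, 1 ≤ m →
      |(∫ r in (0:ℝ)..1, r ^ a * (1 - r) ^ m * (∑ i ∈ Finset.range (N + 1), c i * r ^ i)) /
          (∫ r in (0:ℝ)..1, r ^ (a - 1) * (1 - r) ^ m *
            (∑ i ∈ Finset.range (N + 1), c i * r ^ i)) - a / m| ≤ C / (m : ℝ) ^ 2 := by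
  set K : ℝ := (∑ i ∈ Finset.range (N + 1), c i) * (a * (2 * a + 1)) with hK
  have hsum_nonneg : 0 ≤ ∑ i ∈ Finset.range (N + 1), c i :=
    Finset.sum_nonneg fun i hi => hc i (Finset.mem_range_succ_iff.mp hi)
  have hKnn : 0 ≤ K := by positivity
  refine ⟨K / c 0, ?_⟩
  intro m hm
  have hmR : (1:ℝ) ≤ (m:ℝ) := by exact_mod_cast hm
  have hmpos : (0:ℝ) < m := by linarith
  -- rewrite the integrals
  have hNum : (∫ r in (0:ℝ)..1, r ^ a * (1 - r) ^ m *
      (∑ i ∈ Finset.range (N + 1), c i * r ^ i))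
      = ∑ i ∈ Finset.range (N + 1), c i * ermJ m (a + 1 + i) := by
    have := erm_integral_expand m N c (x := a + 1) (by linarith)
    simpa [add_sub_cancel_right] using this
  have hDen : (∫ r in (0:ℝ)..1, r ^ (a - 1) * (1 - r) ^ m *
      (∑ i ∈ Finset.range (N + 1), c i * r ^ i))
      = ∑ i ∈ Finset.range (N + 1), c i * ermJ m (a + i) :=
    erm_integral_expand m N c ha
  rw [hNum, hDen]
  set P : ℝ := ∑ i ∈ Finset.range (N + 1), c i * ermJ m (a + 1 + i) with hP
  set Q : ℝ := ∑ i ∈ Finset.range (N + 1), c i * ermJ m (a + i) with hQ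
  have hJa : 0 < ermJ m a := ermJ_pos m ha
  have hJ1 : 0 < ermJ m (a + 1) := ermJ_pos m (by linarith)
  have hJ2 : 0 < ermJ m (a + 1 + 1) := ermJ_pos m (by linarith)
  have hrec0 : (a + m + 1) * ermJ m (a + 1) = a * ermJ m a := ermJ_rec m ha
  have hrec1 : (a + 1 + m + 1) * ermJ m (a + 1 + 1) = (a + 1) * ermJ m (a + 1) :=
    ermJ_rec m (by linarith)
  have hJ1b : (m:ℝ) * ermJ m (a + 1) ≤ a * ermJ m a := by nlinarith
  have hJ2b : (m:ℝ) * ermJ m (a + 1 + 1) ≤ (a + 1) * ermJ m (a + 1) := by nlinarith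
  -- denominator lower bound
  have hQ0 : c 0 * ermJ m a ≤ Q := by
    have := Finset.single_le_sum (f := fun i => c i * ermJ m (a + i))
      (fun i hi => mul_nonneg (hc i (Finset.mem_range_succ_iff.mp hi))
        (ermJ_pos m (by positivity : (0:ℝ) < a + i)).le)
      (Finset.mem_range.mpr (Nat.succ_pos N))
    simpa using this
  have hQpos : 0 < Q := lt_of_lt_of_le (by positivity) hQ0
  -- per-term bound
  have hterm : ∀ i ∈ Finset.range (N + 1),
      |(m:ℝ) * ((m:ℝ) * (c i * ermJ m (a + 1 + i)) - a * (c i * ermJ m (a + i)))|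
        ≤ c i * (a * (2 * a + 1)) * ermJ m a := by
    intro i hi
    have hci : 0 ≤ c i := hc i (Finset.mem_range_succ_iff.mp hi)
    rcases Nat.eq_zero_or_pos i with rfl | hipos
    · -- i = 0 : use exact recurrence
      simp only [Nat.cast_zero, add_zero]
      have e0 : (m:ℝ) * (c 0 * ermJ m (a + 1)) - a * (c 0 * ermJ m a)
          = -(c 0 * ((a + 1) * ermJ m (a + 1))) := by
        linear_combination c 0 * hrec0
      rw [e0, abs_mul, abs_neg, abs_of_nonneg (by positivity : (0:ℝ) ≤ c 0 * ((a+1) * ermJ m (a+1))),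
        abs_of_nonneg hmpos.le]
      nlinarith [mul_le_mul_of_nonneg_left hJ1b (mul_nonneg hci (by linarith : (0:ℝ) ≤ a + 1)),
        mul_nonneg (mul_nonneg hci ha.le) (mul_nonneg ha.le hJa.le)]
    · -- i ≥ 1
      have h1i : (1:ℝ) ≤ i := by exact_mod_cast hipos
      have hmono1 : ermJ m (a + i) ≤ ermJ m (a + 1) :=
        ermJ_mono m (by linarith) (by linarith)
      have hmono2 : ermJ m (a + 1 + i) ≤ ermJ m (a + 1 + 1) :=
        ermJ_mono m (by linarith) (by linarith)
      have hJipos : 0 < ermJ m (a + i) := ermJ_pos m (by positivity)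
      have hJi1pos : 0 < ermJ m (a + 1 + i) := ermJ_pos m (by positivity)
      have habs : |(m:ℝ) * ((m:ℝ) * (c i * ermJ m (a + 1 + i)) - a * (c i * ermJ m (a + i)))|
          ≤ (m:ℝ) * ((m:ℝ) * (c i * ermJ m (a + 1 + i)) + a * (c i * ermJ m (a + i))) := by
        rw [abs_mul, abs_of_nonneg hmpos.le]
        apply mul_le_mul_of_nonneg_left _ hmpos.le
        calc |(m:ℝ) * (c i * ermJ m (a + 1 + i)) - a * (c i * ermJ m (a + i))|
            ≤ |(m:ℝ) * (c i * ermJ m (a + 1 + i))| + |a * (c i * ermJ m (a + i))| :=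
              abs_sub _ _
          _ = (m:ℝ) * (c i * ermJ m (a + 1 + i)) + a * (c i * ermJ m (a + i)) := by
              rw [abs_of_nonneg (by positivity), abs_of_nonneg (by positivity)]
      refine habs.trans ?_
      have b1 : (m:ℝ) * ((m:ℝ) * ermJ m (a + 1 + i)) ≤ a * (a + 1) * ermJ m a := by
        calc (m:ℝ) * ((m:ℝ) * ermJ m (a + 1 + i))
            ≤ (m:ℝ) * ((m:ℝ) * ermJ m (a + 1 + 1)) := by
              apply mul_le_mul_of_nonneg_left _ hmpos.le
              exact mul_le_mul_of_nonneg_left hmono2 hmpos.le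
          _ ≤ (m:ℝ) * ((a + 1) * ermJ m (a + 1)) := mul_le_mul_of_nonneg_left hJ2b hmpos.le
          _ = (a + 1) * ((m:ℝ) * ermJ m (a + 1)) := by ring
          _ ≤ (a + 1) * (a * ermJ m a) := mul_le_mul_of_nonneg_left hJ1b (by linarith)
          _ = a * (a + 1) * ermJ m a := by ring
      have b2 : (m:ℝ) * ermJ m (a + i) ≤ a * ermJ m a := by
        have : (m:ℝ) * ermJ m (a + i) ≤ (m:ℝ) * ermJ m (a + 1) :=
          mul_le_mul_of_nonneg_left hmono1 hmpos.le
        linarith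
      nlinarith [mul_le_mul_of_nonneg_left b1 hci,
        mul_le_mul_of_nonneg_left b2 (mul_nonneg ha.le hci)]
  -- sum bound
  have hsumbound : (m:ℝ) * |(m:ℝ) * P - a * Q| ≤ K * ermJ m a := by
    have h1 : (m:ℝ) * P - a * Q = ∑ i ∈ Finset.range (N + 1),
        ((m:ℝ) * (c i * ermJ m (a + 1 + i)) - a * (c i * ermJ m (a + i))) := by
      rw [hP, hQ, Finset.mul_sum, Finset.mul_sum, ← Finset.sum_sub_distrib]
    have h2 : (m:ℝ) * |(m:ℝ) * P - a * Q|
        = |∑ i ∈ Finset.range (N + 1), (m:ℝ) *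
            ((m:ℝ) * (c i * ermJ m (a + 1 + i)) - a * (c i * ermJ m (a + i)))| := by
      rw [← Finset.mul_sum, ← h1, abs_mul, abs_of_nonneg hmpos.le]
    rw [h2]
    calc |∑ i ∈ Finset.range (N + 1), (m:ℝ) *
            ((m:ℝ) * (c i * ermJ m (a + 1 + i)) - a * (c i * ermJ m (a + i)))|
        ≤ ∑ i ∈ Finset.range (N + 1), |(m:ℝ) *
            ((m:ℝ) * (c i * ermJ m (a + 1 + i)) - a * (c i * ermJ m (a + i)))| :=
          Finset.abs_sum_le_sum_abs _ _
      _ ≤ ∑ i ∈ Finset.range (N + 1), c i * (a * (2 * a + 1)) * ermJ m a :=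
          Finset.sum_le_sum hterm
      _ = K * ermJ m a := by rw [hK, ← Finset.sum_mul, ← Finset.sum_mul]
  -- final arithmetic
  have hstep : P / Q - a / m = ((m:ℝ) * P - a * Q) / ((m:ℝ) * Q) := by
    field_simp
  rw [hstep, abs_div, abs_of_nonneg (by positivity : (0:ℝ) ≤ (m:ℝ) * Q)]
  rw [div_le_div_iff₀ (by positivity) (by positivity : (0:ℝ) < (m:ℝ)^2)]
  -- |m P - a Q| * m^2 ≤ K / c 0 * (m * Q)
  have hKQ : K * ermJ m a * c 0 ≤ K * Q := by nlinarith [mul_le_mul_of_nonneg_left hQ0 hKnn]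
  rw [div_mul_eq_mul_div, le_div_iff₀ hc0]
  nlinarith [mul_le_mul_of_nonneg_left hsumbound (mul_nonneg hmpos.le hc0.le),
    mul_le_mul_of_nonneg_left hKQ hmpos.le]
end

section
/- Let H ≥ 1 be a natural number and let (r_1, χ_1), …, (r_H, χ_H) be i.i.d. random pairs on a probability space, where each χ_i takes values in {0, 1} and each r_i takes values in [0, 1]. Let M₀ = P(χ_1 = 1) and M₁ = E[r_1 χ_1], and suppose M₀ > 0. Then E[ (Σ_{i=1}^H r_i χ_i) / (Σ_{i=1}^H χ_i) · 1{Σ_{i=1}^H χ_i ≥ 1} ] = (M₁/M₀) · (1 − (1 − M₀)^H). -/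
open MeasureTheory ProbabilityTheory

private lemma erm_integrable {Ω : Type*} [MeasurableSpace Ω] (P : Measure Ω)
    [IsProbabilityMeasure P] {f : Ω → ℝ} (hf : Measurable f) {C : ℝ}
    (h : ∀ ω, |f ω| ≤ C) : Integrable f P :=
  ⟨hf.aestronglyMeasurable, HasFiniteIntegral.of_bounded (C := C)
    (ae_of_all _ (by simpa [Real.norm_eq_abs] using h))⟩

private lemma erm_pascal_step (n : ℕ) (p : ℝ) (g : ℝ → ℝ) :
    p * (∑ k ∈ Finset.range (n+1), (n.choose k : ℝ) * p^k * (1-p)^(n-k) * g (1+k))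
      + (1-p) * (∑ k ∈ Finset.range (n+1), (n.choose k : ℝ) * p^k * (1-p)^(n-k) * g k)
    = ∑ k ∈ Finset.range (n+2), ((n+1).choose k : ℝ) * p^k * (1-p)^(n+1-k) * g k := by
  set q := 1 - p with hq
  rw [Finset.mul_sum, Finset.mul_sum]
  rw [show n + 2 = (n+1) + 1 from rfl,
    Finset.sum_range_succ' (fun k => (((n+1).choose k : ℝ)) * p^k * q^(n+1-k) * g k) (n+1)]
  rw [Finset.sum_range_succ' (fun k => q * ((n.choose k : ℝ) * p^k * q^(n-k) * g k)) n]
  have hext : ∑ k ∈ Finset.range n, q * ((n.choose (k+1) : ℝ) * p^(k+1) * q^(n-(k+1)) * g (((k+1:ℕ):ℝ)))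
      = ∑ k ∈ Finset.range (n+1), q * ((n.choose (k+1) : ℝ) * p^(k+1) * q^(n-(k+1)) * g (((k+1:ℕ):ℝ))) := by
    rw [Finset.sum_range_succ]
    simp [Nat.choose_succ_self]
  rw [hext, ← add_assoc, ← Finset.sum_add_distrib]
  have hmain : ∑ k ∈ Finset.range (n+1),
      (p * ((n.choose k : ℝ) * p^k * q^(n-k) * g (1+k))
        + q * ((n.choose (k+1) : ℝ) * p^(k+1) * q^(n-(k+1)) * g (((k+1:ℕ):ℝ))))
      = ∑ k ∈ Finset.range (n+1), (((n+1).choose (k+1) : ℝ)) * p^(k+1) * q^(n+1-(k+1)) * g (((k+1:ℕ):ℝ)) := by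
    refine Finset.sum_congr rfl fun k hk => ?_
    have hkn : k ≤ n := Nat.lt_succ_iff.mp (Finset.mem_range.mp hk)
    have h1 : (1:ℝ) + k = ((k+1 : ℕ) : ℝ) := by push_cast; ring
    have hcast : (((n+1).choose (k+1) : ℕ) : ℝ) = (n.choose k : ℝ) + (n.choose (k+1) : ℝ) := by
      rw [Nat.choose_succ_succ]; push_cast; ring
    rw [h1, hcast]
    have hsub : n + 1 - (k+1) = n - k := by omega
    rw [hsub]
    rcases Nat.lt_or_ge k n with hlt | hge
    · have : n - k = (n - (k+1)) + 1 := by omega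
      rw [this]
      ring
    · have hkn' : k = n := le_antisymm hkn hge
      subst hkn'
      simp [Nat.choose_succ_self]
      ring
  rw [hmain]
  congr 1
  simp [pow_succ]
  ring

private lemma erm_binom_sum (n : ℕ) (p : ℝ) (hp : p ≠ 0) :
    ∑ k ∈ Finset.range (n+1), (n.choose k : ℝ) * p^k * (1-p)^(n-k) * ((1:ℝ)+k)⁻¹
      = (1 - (1-p)^(n+1)) / (((n:ℝ)+1) * p) := by
  set q := 1 - p with hq
  have hn : ((n:ℝ)+1) * p ≠ 0 := mul_ne_zero (by positivity) hp
  rw [eq_div_iff hn]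
  have key : ∀ k ∈ Finset.range (n+1),
      ((n.choose k : ℝ) * p^k * q^(n-k) * ((1:ℝ)+k)⁻¹) * (((n:ℝ)+1) * p)
        = ((n+1).choose (k+1) : ℝ) * p^(k+1) * q^(n-k) := by
    intro k _
    have h1 : ((n+1) * n.choose k : ℕ) = ((n+1).choose (k+1)) * (k+1) :=
      Nat.add_one_mul_choose_eq n k
    have h2 : ((n:ℝ)+1) * (n.choose k : ℝ) = ((n+1).choose (k+1) : ℝ) * ((k:ℝ)+1) := by
      exact_mod_cast h1
    have hk1 : ((1:ℝ)+k) ≠ 0 := by positivity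
    field_simp
    linear_combination (p^(k+1) * q^(n-k)) * h2
  rw [Finset.sum_mul, Finset.sum_congr rfl key]
  have expand : ∑ k ∈ Finset.range (n+2), p^k * q^(n+1-k) * ((n+1).choose k : ℝ) = (1:ℝ) := by
    have := add_pow p q (n+1)
    rw [hq] at this ⊢
    simpa using this.symm
  calc ∑ k ∈ Finset.range (n+1), ((n+1).choose (k+1) : ℝ) * p^(k+1) * q^(n-k)
      = ∑ k ∈ Finset.range (n+2), p^k * q^(n+1-k) * ((n+1).choose k : ℝ) - q^(n+1) := by
        rw [Finset.sum_range_succ' (fun k => p^k * q^(n+1-k) * ((n+1).choose k : ℝ)) (n+1)]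
        have : ∀ k ∈ Finset.range (n+1),
            p^(k+1) * q^(n+1-(k+1)) * (((n+1).choose (k+1) : ℕ) : ℝ)
              = ((n+1).choose (k+1) : ℝ) * p^(k+1) * q^(n-k) := by
          intro k _
          have : n + 1 - (k+1) = n - k := by omega
          rw [this]; ring
        rw [Finset.sum_congr rfl this]
        simp
    _ = 1 - q^(n+1) := by rw [expand]

private lemma erm_g_sum {Ω : Type*} [MeasurableSpace Ω] (P : Measure Ω)
    [IsProbabilityMeasure P] {ι : Type*} [DecidableEq ι] {χ : ι → Ω → ℝ}
    (hχ : ∀ i ω, χ i ω = 0 ∨ χ i ω = 1)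
    (hχm : ∀ i, Measurable (χ i))
    (hind : iIndepFun χ P)
    (p : ℝ) (hp : ∀ i, ∫ ω, χ i ω ∂P = p) (s : Finset ι) :
    ∀ (g : ℝ → ℝ), Measurable g → (∀ t, |g t| ≤ 1) →
    ∫ ω, g (∑ j ∈ s, χ j ω) ∂P
      = ∑ k ∈ Finset.range (s.card + 1),
          (s.card.choose k : ℝ) * p^k * (1-p)^(s.card - k) * g k := by
  induction s using Finset.induction_on with
  | empty => intro g hg hgb; simp
  | @insert a s ha ih =>
    intro g hg hgb
    have hχb : ∀ i ω, |χ i ω| ≤ 1 := by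
      intro i ω; rcases hχ i ω with h | h <;> rw [h] <;> norm_num
    set n := s.card with hn
    set T : Ω → ℝ := fun ω => ∑ j ∈ s, χ j ω with hT
    have hTm : Measurable T := Finset.measurable_sum s (fun j _ => hχm j)
    set g1 : ℝ → ℝ := fun t => g (1 + t) with hg1def
    have hg1 : Measurable g1 := hg.comp (measurable_const.add measurable_id)
    have hg1b : ∀ t, |g1 t| ≤ 1 := fun t => hgb _
    -- pointwise decomposition
    have hpt : ∀ ω, g (∑ j ∈ insert a s, χ j ω)
        = χ a ω * g1 (T ω) + (g (T ω) - χ a ω * g (T ω)) := by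
      intro ω
      rw [Finset.sum_insert ha]
      rcases hχ a ω with h | h <;> rw [h] <;> simp [hg1def, hT]
    -- independence
    have hI0 : IndepFun T (χ a) P := by
      have := hind.indepFun_finsetSum_of_notMem hχm ha
      have he : (∑ j ∈ s, χ j) = T := by funext ω; simp [hT]
      rwa [he] at this
    have hIg : IndepFun (g ∘ T) (χ a) P := hI0.comp hg measurable_id
    have hIg1 : IndepFun (g1 ∘ T) (χ a) P := hI0.comp hg1 measurable_id
    -- integrability
    have int_gT : Integrable (fun ω => g (T ω)) P :=
      erm_integrable P (hg.comp hTm) (fun ω => hgb _)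
    have int_g1T : Integrable (fun ω => g1 (T ω)) P :=
      erm_integrable P (hg1.comp hTm) (fun ω => hg1b _)
    have int_χ : Integrable (χ a) P := erm_integrable P (hχm a) (fun ω => hχb a ω)
    have int_mul : Integrable (fun ω => χ a ω * g (T ω)) P := by
      refine erm_integrable P ((hχm a).mul (hg.comp hTm)) (C := 1) (fun ω => ?_)
      rw [abs_mul]
      calc |χ a ω| * |g (T ω)| ≤ 1 * 1 :=
        mul_le_mul (hχb a ω) (hgb _) (abs_nonneg _) zero_le_one
      _ = 1 := by norm_num
    have int_mul1 : Integrable (fun ω => χ a ω * g1 (T ω)) P := by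
      refine erm_integrable P ((hχm a).mul (hg1.comp hTm)) (C := 1) (fun ω => ?_)
      rw [abs_mul]
      calc |χ a ω| * |g1 (T ω)| ≤ 1 * 1 :=
        mul_le_mul (hχb a ω) (hg1b _) (abs_nonneg _) zero_le_one
      _ = 1 := by norm_num
    -- independence product formulas
    have hmul : ∫ ω, χ a ω * g (T ω) ∂P = p * ∫ ω, g (T ω) ∂P := by
      have := IndepFun.integral_mul_eq_mul_integral hIg (int_gT).aestronglyMeasurable int_χ.aestronglyMeasurable
      have he : ∫ ω, χ a ω * g (T ω) ∂P = ∫ ω, ((g ∘ T) * χ a) ω ∂P := by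
        congr 1; funext ω; simp [mul_comm]
      rw [he, this, hp a, mul_comm]
      rfl
    have hmul1 : ∫ ω, χ a ω * g1 (T ω) ∂P = p * ∫ ω, g1 (T ω) ∂P := by
      have := IndepFun.integral_mul_eq_mul_integral hIg1 (int_g1T).aestronglyMeasurable int_χ.aestronglyMeasurable
      have he : ∫ ω, χ a ω * g1 (T ω) ∂P = ∫ ω, ((g1 ∘ T) * χ a) ω ∂P := by
        congr 1; funext ω; simp [mul_comm]
      rw [he, this, hp a, mul_comm]
      rfl
    -- put together
    have hsplit : ∫ ω, g (∑ j ∈ insert a s, χ j ω) ∂P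
        = (∫ ω, χ a ω * g1 (T ω) ∂P) + ((∫ ω, g (T ω) ∂P) - ∫ ω, χ a ω * g (T ω) ∂P) := by
      calc ∫ ω, g (∑ j ∈ insert a s, χ j ω) ∂P
          = ∫ ω, (χ a ω * g1 (T ω) + (g (T ω) - χ a ω * g (T ω))) ∂P :=
            integral_congr_ae (ae_of_all _ hpt)
        _ = (∫ ω, χ a ω * g1 (T ω) ∂P) + ∫ ω, (g (T ω) - χ a ω * g (T ω)) ∂P :=
            integral_add int_mul1 (int_gT.sub int_mul)
        _ = (∫ ω, χ a ω * g1 (T ω) ∂P) + ((∫ ω, g (T ω) ∂P) - ∫ ω, χ a ω * g (T ω) ∂P) := by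
            rw [integral_sub int_gT int_mul]
    rw [hsplit, hmul, hmul1, ih g1 hg1 hg1b, ih g hg hgb,
      Finset.card_insert_of_notMem ha]
    have : p * (∑ k ∈ Finset.range (n+1), (n.choose k : ℝ) * p^k * (1-p)^(n-k) * g1 k)
        + (1-p) * (∑ k ∈ Finset.range (n+1), (n.choose k : ℝ) * p^k * (1-p)^(n-k) * g k)
        = ∑ k ∈ Finset.range (n+2), ((n+1).choose k : ℝ) * p^k * (1-p)^(n+1-k) * g k := by
      rw [← erm_pascal_step n p g]
    rw [← this]
    ring

/-- Exact expected ERM risk in the realisable case: for i.i.d. pairs `(r_i, χ_i)` with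
`χ_i ∈ {0, 1}`, `r_i ∈ [0, 1]`, `M₀ = P(χ₁ = 1) > 0` and `M₁ = E[r₁ χ₁]`, the expected value of
`(Σ r_i χ_i)/(Σ χ_i)` on the event `Σ χ_i ≥ 1` equals `(M₁/M₀)(1 − (1 − M₀)^H)`. -/
theorem expected_erm_risk {Ω : Type*} [MeasurableSpace Ω] (P : Measure Ω)
    [IsProbabilityMeasure P] (H : ℕ) (hH : 1 ≤ H) (r χ : Fin H → Ω → ℝ)
    (hr : ∀ i ω, r i ω ∈ Set.Icc (0:ℝ) 1)
    (hχ : ∀ i ω, χ i ω = 0 ∨ χ i ω = 1)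
    (hmeas : ∀ i, Measurable fun ω => (r i ω, χ i ω))
    (hindep : iIndepFun (fun i ω => (r i ω, χ i ω)) P)
    (hident : ∀ i j, IdentDistrib (fun ω => (r i ω, χ i ω)) (fun ω => (r j ω, χ j ω)) P P)
    (M0 M1 : ℝ)
    (hM0 : M0 = (P {ω | χ ⟨0, hH⟩ ω = 1}).toReal)
    (hM1 : M1 = ∫ ω, r ⟨0, hH⟩ ω * χ ⟨0, hH⟩ ω ∂P)
    (hM0pos : 0 < M0) :
    ∫ ω, (if 1 ≤ ∑ i, χ i ω then (∑ i, r i ω * χ i ω) / (∑ i, χ i ω) else 0) ∂P =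
      M1 / M0 * (1 - (1 - M0) ^ H) := by
  classical
  set i0 : Fin H := ⟨0, hH⟩ with hi0
  have hrm : ∀ i, Measurable (r i) := fun i => measurable_fst.comp (hmeas i)
  have hχm : ∀ i, Measurable (χ i) := fun i => measurable_snd.comp (hmeas i)
  have hχb : ∀ i ω, |χ i ω| ≤ 1 := by
    intro i ω; rcases hχ i ω with h | h <;> rw [h] <;> norm_num
  have hχnn : ∀ i ω, 0 ≤ χ i ω := by
    intro i ω; rcases hχ i ω with h | h <;> rw [h] <;> norm_num
  have hrb : ∀ i ω, |r i ω| ≤ 1 := by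
    intro i ω; rw [abs_of_nonneg (hr i ω).1]; exact (hr i ω).2
  -- independence of the χ family
  have hχind : iIndepFun χ P :=
    hindep.comp (fun _ => (Prod.snd : ℝ × ℝ → ℝ)) (fun _ => measurable_snd)
  -- expectation of each χ i is M0
  have hEχ : ∀ i, ∫ ω, χ i ω ∂P = M0 := by
    intro i
    have h1 : IdentDistrib (χ i) (χ i0) P P := by
      have := (hident i i0).comp (u := (Prod.snd : ℝ × ℝ → ℝ)) measurable_snd
      exact this
    rw [h1.integral_eq, hM0]
    have hset : MeasurableSet {ω | χ i0 ω = 1} := by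
      have : {ω | χ i0 ω = 1} = χ i0 ⁻¹' {1} := rfl
      rw [this]; exact hχm i0 (measurableSet_singleton 1)
    have hind : (fun ω => χ i0 ω)
        = fun ω => Set.indicator {ω | χ i0 ω = 1} (fun _ => (1:ℝ)) ω := by
      funext ω
      rcases hχ i0 ω with h | h <;>
        simp [Set.indicator_apply, Set.mem_setOf_eq, h]
    rw [hind, integral_indicator_const (1:ℝ) hset]
    simp
    rfl
  -- expectation of each r i * χ i is M1
  have hErχ : ∀ i, ∫ ω, r i ω * χ i ω ∂P = M1 := by
    intro i
    have h1 := (hident i i0).comp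
      (u := fun x : ℝ × ℝ => x.1 * x.2) (measurable_fst.mul measurable_snd)
    rw [hM1]
    exact h1.integral_eq
  -- the kernel function G
  set G : ℝ → ℝ := fun t => (1 + max t 0)⁻¹ with hGdef
  have hGm : Measurable G :=
    (measurable_const.add (measurable_id.max measurable_const)).inv
  have hGpos : ∀ t : ℝ, 0 < 1 + max t 0 := by
    intro t
    have : (0:ℝ) ≤ max t 0 := le_max_right _ _
    linarith
  have hGb : ∀ t, |G t| ≤ 1 := by
    intro t
    have h1 : (1:ℝ) ≤ 1 + max t 0 := by
      have : (0:ℝ) ≤ max t 0 := le_max_right _ _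
      linarith
    rw [hGdef, abs_of_nonneg (by positivity)]
    exact inv_le_one_of_one_le₀ h1
  -- pointwise identity
  have hpt : ∀ ω, (if 1 ≤ ∑ i, χ i ω then (∑ i, r i ω * χ i ω) / (∑ i, χ i ω) else 0)
      = ∑ i, r i ω * χ i ω * G (∑ j ∈ Finset.univ.erase i, χ j ω) := by
    intro ω
    by_cases h1 : 1 ≤ ∑ i, χ i ω
    · rw [if_pos h1, div_eq_mul_inv, Finset.sum_mul]
      refine Finset.sum_congr rfl fun i _ => ?_
      have herase : ∑ j ∈ Finset.univ.erase i, χ j ω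
          = (∑ j, χ j ω) - χ i ω := Finset.sum_erase_eq_sub (Finset.mem_univ i)
      rcases hχ i ω with h | h
      · rw [h]; ring
      · rw [herase, h]
        have hmax : max ((∑ j, χ j ω) - 1) 0 = (∑ j, χ j ω) - 1 :=
          max_eq_left (by linarith)
        have : G ((∑ j, χ j ω) - 1) = (∑ j, χ j ω)⁻¹ := by
          rw [hGdef]; simp only [hmax]; ring_nf
        rw [this]
    · rw [if_neg h1]
      have hzero : ∀ i, χ i ω = 0 := by
        intro i
        by_contra hne
        have hone := (hχ i ω).resolve_left hne
        have : (1:ℝ) ≤ ∑ j, χ j ω := by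
          calc (1:ℝ) = χ i ω := hone.symm
          _ ≤ ∑ j, χ j ω :=
            Finset.single_le_sum (fun j _ => hχnn j ω) (Finset.mem_univ i)
        exact h1 this
      symm
      apply Finset.sum_eq_zero
      intro i _
      rw [hzero i]; ring
  -- integrability of each term
  have hTm : ∀ i : Fin H, Measurable fun ω => ∑ j ∈ Finset.univ.erase i, χ j ω :=
    fun i => Finset.measurable_sum _ (fun j _ => hχm j)
  have hint : ∀ i : Fin H,
      Integrable (fun ω => r i ω * χ i ω * G (∑ j ∈ Finset.univ.erase i, χ j ω)) P := by
    intro i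
    refine erm_integrable P (((hrm i).mul (hχm i)).mul (hGm.comp (hTm i))) (C := 1)
      (fun ω => ?_)
    rw [abs_mul, abs_mul]
    calc |r i ω| * |χ i ω| * |G _| ≤ 1 * 1 * 1 := by
          gcongr <;> first | exact hrb i ω | exact hχb i ω | exact hGb _ |
            exact abs_nonneg _ | exact mul_nonneg (abs_nonneg _) (abs_nonneg _)
      _ = 1 := by norm_num
  -- value of each term
  set B : ℝ := ∑ k ∈ Finset.range (H - 1 + 1),
      (((H-1).choose k : ℝ)) * M0^k * (1-M0)^(H-1-k) * G k with hB
  have hterm : ∀ i : Fin H,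
      ∫ ω, r i ω * χ i ω * G (∑ j ∈ Finset.univ.erase i, χ j ω) ∂P = M1 * B := by
    intro i
    set f : Fin H → Ω → ℝ × ℝ := fun i ω => (r i ω, χ i ω) with hf
    have hIf : IndepFun (∑ j ∈ Finset.univ.erase i, f j) (f i) P :=
      hindep.indepFun_finsetSum_of_notMem hmeas (Finset.notMem_erase i Finset.univ)
    have hφ : Measurable (fun x : ℝ × ℝ => x.1 * x.2) := measurable_fst.mul measurable_snd
    have hψ : Measurable (fun x : ℝ × ℝ => G x.2) := hGm.comp measurable_snd
    have hIc : IndepFun ((fun x : ℝ × ℝ => G x.2) ∘ (∑ j ∈ Finset.univ.erase i, f j))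
        ((fun x : ℝ × ℝ => x.1 * x.2) ∘ (f i)) P := hIf.comp hψ hφ
    have hψe : ((fun x : ℝ × ℝ => G x.2) ∘ (∑ j ∈ Finset.univ.erase i, f j))
        = fun ω => G (∑ j ∈ Finset.univ.erase i, χ j ω) := by
      funext ω
      simp only [Function.comp_apply, Finset.sum_apply, Prod.snd_sum]
      rfl
    have hφe : ((fun x : ℝ × ℝ => x.1 * x.2) ∘ (f i)) = fun ω => r i ω * χ i ω := rfl
    rw [hψe, hφe] at hIc
    have intψ : Integrable (fun ω => G (∑ j ∈ Finset.univ.erase i, χ j ω)) P :=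
      erm_integrable P (hGm.comp (hTm i)) (fun ω => hGb _)
    have intφ : Integrable (fun ω => r i ω * χ i ω) P := by
      refine erm_integrable P ((hrm i).mul (hχm i)) (C := 1) (fun ω => ?_)
      rw [abs_mul]
      calc |r i ω| * |χ i ω| ≤ 1 * 1 :=
        mul_le_mul (hrb i ω) (hχb i ω) (abs_nonneg _) zero_le_one
      _ = 1 := by norm_num
    have hprod := IndepFun.integral_mul_eq_mul_integral hIc intψ.aestronglyMeasurable intφ.aestronglyMeasurable
    have he : ∫ ω, r i ω * χ i ω * G (∑ j ∈ Finset.univ.erase i, χ j ω) ∂P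
        = ∫ ω, ((fun ω => G (∑ j ∈ Finset.univ.erase i, χ j ω))
            * (fun ω => r i ω * χ i ω)) ω ∂P := by
      congr 1; funext ω; simp [mul_comm]
    rw [he, hprod, hErχ i]
    have hcard : (Finset.univ.erase i).card = H - 1 := by
      rw [Finset.card_erase_of_mem (Finset.mem_univ i)]
      simp
    have hGsum := erm_g_sum P hχ hχm hχind M0 hEχ (Finset.univ.erase i) G hGm hGb
    rw [hcard] at hGsum
    rw [show (∫ ω, G (∑ j ∈ Finset.univ.erase i, χ j ω) ∂P) = B from by rw [hGsum, hB]]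
    ring
  -- assemble
  have hLHS : ∫ ω, (if 1 ≤ ∑ i, χ i ω then (∑ i, r i ω * χ i ω) / (∑ i, χ i ω) else 0) ∂P
      = ∑ i : Fin H, ∫ ω, r i ω * χ i ω * G (∑ j ∈ Finset.univ.erase i, χ j ω) ∂P := by
    rw [integral_congr_ae (ae_of_all _ hpt)]
    exact integral_finset_sum _ (fun i _ => hint i)
  rw [hLHS, Finset.sum_congr rfl (fun i _ => hterm i), Finset.sum_const]
  simp only [Finset.card_univ, Fintype.card_fin, nsmul_eq_mul]
  -- compute B
  have hGk : ∀ k : ℕ, G (k : ℝ) = ((1:ℝ) + k)⁻¹ := by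
    intro k
    have hmx : max ((k:ℕ):ℝ) 0 = ((k:ℕ):ℝ) := max_eq_left (by positivity)
    rw [hGdef]
    simp only [hmx]
  have hBval : B = (1 - (1-M0)^H) / ((H:ℝ) * M0) := by
    rw [hB, Finset.sum_congr rfl (fun k _ => by rw [hGk k]),
      erm_binom_sum (H-1) M0 hM0pos.ne']
    have h1 : H - 1 + 1 = H := Nat.succ_pred_eq_of_pos hH
    have h2 : ((H-1 : ℕ) : ℝ) + 1 = (H : ℝ) := by
      rw [Nat.cast_sub hH]; push_cast; ring
    rw [h1, h2]
  rw [hBval]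
  have hHne : (H:ℝ) ≠ 0 := by positivity
  field_simp
end

section
/- Let p ≥ 2 be a natural number. For each natural number m define R(m) = (∫_0^1 r (1−r)^m (sin(π r))^(p−2) dr) / (∫_0^1 (1−r)^m (sin(π r))^(p−2) dr). Then m · R(m) → p − 1 as m → ∞. -/
open Real MeasureTheory Filter

/-- Gamma-type integral: `∫_{(0,∞)} e^{-t} t^k dt = k!`. -/
lemma integral_exp_neg_pow (k : ℕ) :
    ∫ t in Set.Ioi (0:ℝ), Real.exp (-t) * t ^ k = (k.factorial : ℝ) := by
  have h := Real.Gamma_eq_integral (s := (k:ℝ) + 1) (by positivity)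
  rw [show ((k:ℝ) + 1 - 1) = (k:ℝ) by ring] at h
  have h2 : (∫ x in Set.Ioi (0:ℝ), Real.exp (-x) * x ^ ((k:ℝ))) =
      ∫ x in Set.Ioi (0:ℝ), Real.exp (-x) * x ^ k := by
    refine setIntegral_congr_fun measurableSet_Ioi fun x hx => ?_
    rw [Real.rpow_natCast]
  rw [h2] at h
  rw [← h, Real.Gamma_nat_eq_factorial]

lemma integrable_exp_neg_pow (k : ℕ) :
    IntegrableOn (fun t : ℝ => Real.exp (-t) * t ^ k) (Set.Ioi (0:ℝ)) := by
  have h := Real.GammaIntegral_convergent (s := (k:ℝ) + 1) (by positivity)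
  rw [show ((k:ℝ) + 1 - 1) = (k:ℝ) by ring] at h
  refine h.congr_fun (fun x hx => ?_) measurableSet_Ioi
  simp only [Real.rpow_natCast]

/-- Laplace-type asymptotics: `m^(k+1) ∫_0^1 (1-r)^m φ(r) dr → c·k!`. -/
lemma laplace_aux_s19 (k : ℕ) (C c : ℝ) (φ : ℝ → ℝ) (hφ : Continuous φ)
    (hC : ∀ r ∈ Set.Ioc (0:ℝ) 1, |φ r| ≤ C * r ^ k)
    (hlim : ∀ t : ℝ, 0 < t →
      Tendsto (fun m : ℕ => (m:ℝ) ^ k * φ (t / m)) atTop (nhds (c * t ^ k))) :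
    Tendsto (fun m : ℕ => (m:ℝ) ^ (k+1) * ∫ r in (0:ℝ)..1, (1-r) ^ m * φ r) atTop
      (nhds (c * k.factorial)) := by
  have hC0 : 0 ≤ C := by
    have := hC 1 ⟨one_pos, le_refl 1⟩
    simpa using (abs_nonneg (φ 1)).trans this
  set F : ℕ → ℝ → ℝ := fun m t =>
    Set.indicator (Set.Ioc 0 (m:ℝ)) (fun t => (1 - t/m) ^ m * ((m:ℝ) ^ k * φ (t/m))) t with hF
  set bound : ℝ → ℝ := fun t => Real.exp (-t) * (C * t ^ k) with hbnd
  -- dominated convergence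
  have hDCT : Tendsto (fun m : ℕ => ∫ t in Set.Ioi (0:ℝ), F m t) atTop
      (nhds (∫ t in Set.Ioi (0:ℝ), Real.exp (-t) * (c * t ^ k))) := by
    refine MeasureTheory.tendsto_integral_of_dominated_convergence bound
      (fun m => ?_) ?_ (fun m => ?_) ?_
    · exact ((((continuous_const.sub (continuous_id.div_const _)).pow m).mul
        (continuous_const.mul (hφ.comp (continuous_id.div_const _)))).aestronglyMeasurable).indicator
        measurableSet_Ioc
    · have := (integrable_exp_neg_pow k).const_mul C
      exact this.congr (Filter.Eventually.of_forall fun x => by ring)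
    · refine (ae_restrict_iff' measurableSet_Ioi).2 (Filter.Eventually.of_forall fun t ht => ?_)
      have ht0 : (0:ℝ) < t := ht
      by_cases hmem : t ∈ Set.Ioc (0:ℝ) (m:ℝ)
      · have hFval : F m t = (1 - t/m) ^ m * ((m:ℝ) ^ k * φ (t/m)) :=
          Set.indicator_of_mem hmem _
        have hm0 : (0:ℝ) < (m:ℝ) := lt_of_lt_of_le ht0 hmem.2
        have hdiv1 : t / m ≤ 1 := (div_le_one hm0).2 hmem.2
        have hdiv0 : 0 < t / m := div_pos ht0 hm0
        have h1 : (1 - t/m) ^ m ≤ Real.exp (-t) := by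
          have hle : 1 - t/m ≤ Real.exp (-(t/m)) := by
            have := Real.add_one_le_exp (-(t/m)); linarith
          have hnn : 0 ≤ 1 - t/m := by linarith
          calc (1 - t/m) ^ m ≤ (Real.exp (-(t/m))) ^ m := pow_le_pow_left₀ hnn hle m
            _ = Real.exp (-t) := by
                rw [← Real.exp_nat_mul]
                congr 1
                field_simp
        have h2 : (m:ℝ) ^ k * |φ (t/m)| ≤ C * t ^ k := by
          have := hC (t/m) ⟨hdiv0, hdiv1⟩
          calc (m:ℝ) ^ k * |φ (t/m)| ≤ (m:ℝ) ^ k * (C * (t/m) ^ k) := by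
                exact mul_le_mul_of_nonneg_left this (by positivity)
            _ = C * t ^ k := by
                rw [div_pow]; field_simp
        rw [hFval]
        have h1n : 0 ≤ (1 - t/m) ^ m := by
          have : 0 ≤ 1 - t/m := by
            have := hdiv1; linarith
          positivity
        calc ‖(1 - t/m) ^ m * ((m:ℝ) ^ k * φ (t/m))‖
            = (1 - t/m) ^ m * ((m:ℝ) ^ k * |φ (t/m)|) := by
              rw [norm_mul, norm_mul, Real.norm_eq_abs, Real.norm_eq_abs, Real.norm_eq_abs,
                abs_of_nonneg h1n, abs_of_nonneg (by positivity : (0:ℝ) ≤ (m:ℝ) ^ k)]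
          _ ≤ Real.exp (-t) * (C * t ^ k) := by
              refine mul_le_mul h1 h2 (by positivity) (Real.exp_pos _).le
      · have : F m t = 0 := Set.indicator_of_notMem hmem _
        rw [this]
        simp only [norm_zero, hbnd]
        positivity
    · refine (ae_restrict_iff' measurableSet_Ioi).2 (Filter.Eventually.of_forall fun t ht => ?_)
      have ht0 : (0:ℝ) < t := ht
      have hev : ∀ᶠ m : ℕ in atTop, F m t = (1 - t/m) ^ m * ((m:ℝ) ^ k * φ (t/m)) := by
        have : ∀ᶠ m : ℕ in atTop, t ≤ (m:ℝ) :=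
          tendsto_natCast_atTop_atTop.eventually_ge_atTop t
        filter_upwards [this] with m hm
        exact Set.indicator_of_mem (show t ∈ Set.Ioc (0:ℝ) (m:ℝ) from ⟨ht0, hm⟩) _
      refine Tendsto.congr' (hev.mono fun m h => h.symm) ?_
      have h1 : Tendsto (fun m : ℕ => (1 - t/m) ^ m) atTop (nhds (Real.exp (-t))) := by
        have := Real.tendsto_one_add_div_pow_exp (-t)
        refine this.congr fun m => ?_
        congr 1
        rw [neg_div]; ring
      exact h1.mul (hlim t ht0)
  -- value of the limit integral
  have hval : (∫ t in Set.Ioi (0:ℝ), Real.exp (-t) * (c * t ^ k)) = c * k.factorial := by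
    have : (∫ t in Set.Ioi (0:ℝ), Real.exp (-t) * (c * t ^ k)) =
        c * ∫ t in Set.Ioi (0:ℝ), Real.exp (-t) * t ^ k := by
      rw [← MeasureTheory.integral_const_mul]
      refine setIntegral_congr_fun measurableSet_Ioi fun x _ => by ring
    rw [this, integral_exp_neg_pow]
  rw [hval] at hDCT
  -- identify ∫ F m with the rescaled interval integral, for m ≥ 1
  refine Tendsto.congr' ?_ hDCT
  filter_upwards [eventually_ge_atTop 1] with m hm
  have hm0 : (0:ℝ) < (m:ℝ) := by exact_mod_cast hm
  have step1 : (∫ t in Set.Ioi (0:ℝ), F m t) =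
      ∫ t in Set.Ioc (0:ℝ) (m:ℝ), (1 - t/m) ^ m * ((m:ℝ) ^ k * φ (t/m)) := by
    rw [hF, setIntegral_indicator measurableSet_Ioc]
    congr 1
    rw [Set.inter_eq_right.2 Set.Ioc_subset_Ioi_self]
  have step2 : (∫ t in Set.Ioc (0:ℝ) (m:ℝ), (1 - t/m) ^ m * ((m:ℝ) ^ k * φ (t/m))) =
      ∫ t in (0:ℝ)..(m:ℝ), (1 - t/m) ^ m * ((m:ℝ) ^ k * φ (t/m)) :=
    (intervalIntegral.integral_of_le hm0.le).symm
  have step3 : (∫ t in (0:ℝ)..(m:ℝ), (1 - t/m) ^ m * ((m:ℝ) ^ k * φ (t/m))) =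
      (m:ℝ) ^ k * ∫ t in (0:ℝ)..(m:ℝ), (1 - t/m) ^ m * φ (t/m) := by
    rw [← intervalIntegral.integral_const_mul]
    refine intervalIntegral.integral_congr fun t _ => by ring
  have step4 : (∫ t in (0:ℝ)..(m:ℝ), (1 - t/m) ^ m * φ (t/m)) =
      (m:ℝ) * ∫ r in (0:ℝ)..1, (1-r) ^ m * φ r := by
    have := intervalIntegral.integral_comp_div (a := (0:ℝ)) (b := (m:ℝ))
      (f := fun r => (1-r) ^ m * φ r) (c := (m:ℝ)) hm0.ne'
    simpa [div_self hm0.ne', smul_eq_mul] using this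
  rw [step1, step2, step3, step4]
  ring

lemma sin_pow_bound (k : ℕ) : ∀ r ∈ Set.Ioc (0:ℝ) 1,
    |Real.sin (π * r) ^ k| ≤ π ^ k * r ^ k := by
  intro r hr
  have h0 : 0 ≤ Real.sin (π * r) :=
    Real.sin_nonneg_of_nonneg_of_le_pi (mul_nonneg Real.pi_pos.le hr.1.le)
      (by nlinarith [Real.pi_pos, hr.2])
  have h1 : Real.sin (π * r) ≤ π * r := Real.sin_le (mul_nonneg Real.pi_pos.le hr.1.le)
  rw [abs_of_nonneg (pow_nonneg h0 k), ← mul_pow]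
  exact pow_le_pow_left₀ h0 h1 k

lemma sin_mul_lim (k : ℕ) (t : ℝ) (ht : 0 < t) :
    Tendsto (fun m : ℕ => (m:ℝ) ^ k * Real.sin (π * (t / m)) ^ k) atTop
      (nhds (π ^ k * t ^ k)) := by
  have hcore : Tendsto (fun m : ℕ => (m:ℝ) * Real.sin (π * (t / m))) atTop (nhds (π * t)) := by
    have hsin : Tendsto (fun x : ℝ => Real.sin x / x) (nhdsWithin 0 {0}ᶜ) (nhds 1) := by
      have := (Real.hasDerivAt_sin 0)
      rw [hasDerivAt_iff_tendsto_slope] at this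
      simp only [Real.cos_zero] at this
      refine this.congr fun x => ?_
      simp [slope_def_field, div_eq_mul_inv]
    have hx : Tendsto (fun m : ℕ => π * t / m) atTop (nhdsWithin 0 {0}ᶜ) := by
      rw [tendsto_nhdsWithin_iff]
      constructor
      · exact tendsto_const_div_atTop_nhds_zero_nat (π * t)
      · filter_upwards [eventually_ge_atTop 1] with m hm
        have hm0 : (0:ℝ) < (m:ℝ) := by exact_mod_cast hm
        have hgt : 0 < π * t / m := by positivity
        exact Set.mem_compl_singleton_iff.mpr hgt.ne'
    have hcomp : Tendsto (fun m : ℕ => Real.sin (π * t / m) / (π * t / m)) atTop (nhds 1) :=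
      hsin.comp hx
    have := (tendsto_const_nhds (x := π * t) (f := atTop (α := ℕ))).mul hcomp
    rw [mul_one] at this
    refine this.congr' ?_
    filter_upwards [eventually_ge_atTop 1] with m hm
    have hm0 : (0:ℝ) < (m:ℝ) := by exact_mod_cast hm
    have hpt : π * t / m ≠ 0 := by positivity
    rw [mul_comm π (t/m)]
    field_simp
  have := hcore.pow k
  rw [← mul_pow]
  refine this.congr fun m => ?_
  rw [mul_pow]

open intervalIntegral in
/-- Asymptotic expected ERM risk of the realisable perceptron with `p` features (annealed
approximation): with risk density proportional to `sin^(p−2)(π r)`, `m · R(m) → p − 1`. -/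
theorem perceptron_erm_asymptotic (p : ℕ) (hp : 2 ≤ p) :
    Tendsto (fun m : ℕ => (m : ℝ) *
        ((∫ r in (0:ℝ)..1, r * (1 - r) ^ m * Real.sin (π * r) ^ (p - 2)) /
          (∫ r in (0:ℝ)..1, (1 - r) ^ m * Real.sin (π * r) ^ (p - 2))))
      atTop (nhds ((p : ℝ) - 1)) := by
  obtain ⟨q, rfl⟩ : ∃ q, p = q + 2 := ⟨p - 2, by omega⟩
  simp only [Nat.add_sub_cancel]
  -- denominator asymptotics
  have hA := laplace_aux_s19 q (π ^ q) (π ^ q) (fun r => Real.sin (π * r) ^ q)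
    (by continuity) (sin_pow_bound q) (fun t ht => sin_mul_lim q t ht)
  -- numerator asymptotics
  have hB := laplace_aux_s19 (q+1) (π ^ q) (π ^ q) (fun r => r * Real.sin (π * r) ^ q)
    (by continuity) ?_ ?_
  · -- main limit computation
    have hpos : ∀ m : ℕ, 0 < ∫ r in (0:ℝ)..1, (1-r) ^ m * Real.sin (π * r) ^ q := by
      intro m
      refine intervalIntegral.intervalIntegral_pos_of_pos_on ?_ ?_ one_pos
      · exact (Continuous.intervalIntegrable (by continuity) _ _)
      · intro x hx
        have h1 : 0 < 1 - x := by linarith [hx.2]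
        have h2 : 0 < Real.sin (π * x) := by
          apply Real.sin_pos_of_pos_of_lt_pi
          · exact mul_pos Real.pi_pos hx.1
          · nlinarith [Real.pi_pos, hx.2]
        positivity
    have hne : π ^ q * ((q:ℕ).factorial : ℝ) ≠ 0 := by positivity
    have hdiv := hB.div hA hne
    have hlim_val : (π ^ q * ((q+1).factorial : ℝ)) / (π ^ q * ((q:ℕ).factorial : ℝ))
        = ((q:ℝ) + 2) - 1 := by
      rw [Nat.factorial_succ]
      push_cast
      field_simp
      ring
    rw [hlim_val] at hdiv
    have : ((q + 2 : ℕ) : ℝ) - 1 = ((q:ℝ) + 2) - 1 := by push_cast; ring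
    rw [this]
    refine Tendsto.congr' ?_ hdiv
    filter_upwards [eventually_ge_atTop 1] with m hm
    have hm0 : (0:ℝ) < (m:ℝ) := by exact_mod_cast hm
    simp only [Pi.div_apply]
    have hInum : (∫ r in (0:ℝ)..1, (1-r) ^ m * (r * Real.sin (π * r) ^ q)) =
        ∫ r in (0:ℝ)..1, r * (1-r) ^ m * Real.sin (π * r) ^ q :=
      intervalIntegral.integral_congr fun r _ => by ring
    rw [hInum]
    set J := ∫ r in (0:ℝ)..1, r * (1-r) ^ m * Real.sin (π * r) ^ q
    set I := ∫ r in (0:ℝ)..1, (1-r) ^ m * Real.sin (π * r) ^ q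
    have hI : I ≠ 0 := (hpos m).ne'
    field_simp
    ring
  · -- bound for numerator integrand
    intro r hr
    have := sin_pow_bound q r hr
    have hr0 : 0 < r := hr.1
    calc |r * Real.sin (π * r) ^ q| = r * |Real.sin (π * r) ^ q| := by
          rw [abs_mul, abs_of_nonneg hr0.le]
      _ ≤ r * (π ^ q * r ^ q) := mul_le_mul_of_nonneg_left this hr0.le
      _ = π ^ q * r ^ (q+1) := by ring
  · -- pointwise limit for numerator
    intro t ht
    have := ((tendsto_const_nhds (x := t) (f := atTop (α := ℕ))).mul (sin_mul_lim q t ht))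
    have h2 : t * (π ^ q * t ^ q) = π ^ q * t ^ (q+1) := by ring
    rw [h2] at this
    refine Tendsto.congr' ?_ this
    filter_upwards [eventually_ge_atTop 1] with m hm
    have hm0 : (0:ℝ) < (m:ℝ) := by exact_mod_cast hm
    field_simp
    ring
end
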